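/- arXiv:1006.4222 — 11 statements merged into one kernel-verified Lean document; each statement's English description precedes it below -/
import Mathlib

section
/- Let S be an atomic monoid and b ∈ S. Then ω(S,b) equals the smallest N ∈ ℕ₀ ∪ {∞} such that: for all n ∈ ℕ and atoms a₁,…,aₙ ∈ 𝒜(S), if b divides a₁⋯aₙ, then there exists a subset Ω ⊆ [1,n] with |Ω| ≤ N such that b divides ∏_{ν∈Ω} a_ν. That is, in the definition of ω(S,b) one may restrict the products a₁⋯aₙ to products of atoms without changing the value. -/
open scoped BigOperators

/-! Factor each `aᵢ` into atoms up to a unit and tag every atom with the index it came from.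
If `b` divides the product of some `N` of these atoms, then it divides the product of the
at most `N` elements `aᵢ` they came from, since the atoms chosen from `aᵢ` multiply to a
divisor of `aᵢ`. -/

section

variable {M : Type*} [CommMonoid M]

theorem exists_list_irreducible_associated
    (hatomic : ∀ a : M, ¬IsUnit a →
      ∃ m : Multiset M, (∀ x ∈ m, Irreducible x) ∧ m.prod = a)
    (a : M) : ∃ l : List M, (∀ x ∈ l, Irreducible x) ∧ Associated l.prod a := by
  by_cases ha : IsUnit a
  · exact ⟨[], by simp, by simpa using (associated_one_iff_isUnit.mpr ha).symm⟩
  · obtain ⟨m, hirr, rfl⟩ := hatomic a ha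
    exact ⟨m.toList, fun x hx => hirr x (Multiset.mem_toList.mp hx), by rw [Multiset.prod_toList]⟩

theorem exists_finset_card_le_dvd_prod_of_fintype {P : M → Prop} {b : M} {N : ℕ∞}
    (h : ∀ (n : ℕ) (a : Fin n → M), (∀ i, P (a i)) → b ∣ ∏ i, a i →
      ∃ Ω : Finset (Fin n), (Ω.card : ℕ∞) ≤ N ∧ b ∣ ∏ i ∈ Ω, a i)
    {ι : Type*} [Fintype ι] (c : ι → M) (hc : ∀ i, P (c i)) (hb : b ∣ ∏ i, c i) :
    ∃ Ω : Finset ι, (Ω.card : ℕ∞) ≤ N ∧ b ∣ ∏ i ∈ Ω, c i := by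
  let e := (Fintype.equivFin ι).symm
  have hprod : ∏ i, c (e i) = ∏ i, c i := Fintype.prod_equiv e _ _ fun _ => rfl
  obtain ⟨Ω, hcard, hΩ⟩ := h _ (c ∘ e) (fun i => hc (e i)) (hprod ▸ hb)
  refine ⟨Ω.map e.toEmbedding, by simpa using hcard, ?_⟩
  rwa [Finset.prod_map]

theorem Finset.prod_dvd_prod_image_fst {ι : Type*} [DecidableEq ι] {β : ι → Type*}
    [∀ i, Fintype (β i)] (c : (Σ i, β i) → M) (a : ι → M) (h : ∀ i, ∏ j, c ⟨i, j⟩ ∣ a i)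
    (Ω : Finset (Σ i, β i)) : ∏ x ∈ Ω, c x ∣ ∏ i ∈ Ω.image Sigma.fst, a i := by
  have hsub : Ω ⊆ (Ω.image Sigma.fst).sigma fun _ => Finset.univ := fun x hx =>
    Finset.mem_sigma.mpr ⟨Finset.mem_image_of_mem _ hx, Finset.mem_univ _⟩
  calc ∏ x ∈ Ω, c x ∣ ∏ x ∈ (Ω.image Sigma.fst).sigma fun _ => Finset.univ, c x :=
        Finset.prod_dvd_prod_of_subset _ _ _ hsub
    _ = ∏ i ∈ Ω.image Sigma.fst, ∏ j, c ⟨i, j⟩ := Finset.prod_sigma _ _ _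
    _ ∣ ∏ i ∈ Ω.image Sigma.fst, a i := Finset.prod_dvd_prod_of_dvd _ _ fun i _ => h i

end

/-- In the definition of `ω(S,b)` one may restrict to products of atoms
(irreducible elements) without changing the value. -/
theorem omega_eq_omega_atoms {S : Type*} [CancelCommMonoid S]
    (hatomic : ∀ a : S, ¬IsUnit a →
      ∃ m : Multiset S, (∀ x ∈ m, Irreducible x) ∧ m.prod = a)
    (b : S) :
    sInf {N : ℕ∞ | ∀ (n : ℕ) (a : Fin n → S), b ∣ ∏ i, a i →
        ∃ Ω : Finset (Fin n), (Ω.card : ℕ∞) ≤ N ∧ b ∣ ∏ i ∈ Ω, a i}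
      =
    sInf {N : ℕ∞ | ∀ (n : ℕ) (a : Fin n → S), (∀ i, Irreducible (a i)) →
        b ∣ ∏ i, a i →
        ∃ Ω : Finset (Fin n), (Ω.card : ℕ∞) ≤ N ∧ b ∣ ∏ i ∈ Ω, a i} := by
  refine le_antisymm (le_sInf fun N hN => sInf_le fun n a hb => ?_)
    (sInf_le_sInf fun N hN n a _ hb => hN n a hb)
  choose l hirr hassoc using fun i => exists_list_irreducible_associated hatomic (a i)
  let c : (Σ i, Fin (l i).length) → S := fun x => (l x.1).get x.2
  have hc : ∀ i, ∏ j, c ⟨i, j⟩ = (l i).prod := fun i => by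
    rw [← List.prod_ofFn, List.ofFn_get]
  have hbc : b ∣ ∏ x, c x := by
    rw [Fintype.prod_sigma, Finset.prod_congr rfl fun i _ => hc i]
    exact (Associated.prod _ _ _ fun i _ => hassoc i).dvd_iff_dvd_right.mpr hb
  obtain ⟨Ω, hcard, hΩ⟩ := exists_finset_card_le_dvd_prod_of_fintype hN c
    (fun x => hirr _ _ (List.get_mem _ _)) hbc
  refine ⟨Ω.image Sigma.fst, (Nat.cast_le.mpr Finset.card_image_le).trans hcard, ?_⟩
  exact hΩ.trans (Ω.prod_dvd_prod_image_fst c a fun i => (hc i).symm ▸ (hassoc i).dvd)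
end

section
/- Let S be a reduced atomic monoid and s ∈ S. Then ω(S,s) = sup{ |x| : x ∈ Min(Z(sS)) }, where Z(sS) is the set of factorizations (formal products of atoms) whose image in S is divisible by s, Min denotes the minimal elements with respect to divisibility in the free monoid Z(S), and |x| is the length of the factorization x. -/
/-!
`ω ≤ sup`: factor every `aᵢ` into atoms (a unit by the empty factorization, up to associates) and
take a sub-factorization `t` of the concatenation that is minimal among those divisible by `s`.
Each atom of `t` lies in the factorization of some `aᵢ`, so `s` divides a subproduct of at most
`|t|` of the `aᵢ`.

`sup ≤ ω`: a minimal `x`, read as a product of `|x|` atoms, has no proper subproduct divisible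
by `s`.
-/

namespace Multiset

variable {α M : Type*}

lemma exists_eq_add_of_le_add {t a b : Multiset α} (h : t ≤ a + b) :
    ∃ t₁ ≤ a, ∃ t₂ ≤ b, t = t₁ + t₂ := by
  classical
  exact ⟨t ∩ a, inter_le_right, t - a, Multiset.sub_le_iff_le_add'.2 h,
    by rw [add_comm, sub_add_inter]⟩

lemma map_get_le (l : List α) (Ω : Finset (Fin l.length)) : Ω.val.map l.get ≤ l :=
  (map_le_map (Finset.val_le_iff.2 Ω.subset_univ)).trans_eq (by simp)

lemma exists_finset_card_le_prod_dvd_of_le_sum [CommMonoid M] {ι : Type*} (I : Finset ι)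
    (f : ι → Multiset M) {t : Multiset M} (ht : t ≤ ∑ i ∈ I, f i) :
    ∃ Ω ⊆ I, Ω.card ≤ card t ∧ t.prod ∣ ∏ i ∈ Ω, (f i).prod := by
  classical
  induction I using Finset.induction_on generalizing t with
  | empty => exact ⟨∅, subset_rfl, by simp, by simp [le_zero.1 (by simpa using ht)]⟩
  | @insert j I hj ih =>
    rw [Finset.sum_insert hj] at ht
    obtain ⟨t₁, ht₁, t₂, ht₂, rfl⟩ := exists_eq_add_of_le_add ht
    obtain ⟨Ω, hΩI, hcard, hdvd⟩ := ih ht₂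
    by_cases h₁ : t₁ = 0
    · subst h₁
      exact ⟨Ω, hΩI.trans (Finset.subset_insert _ _), by simpa using hcard, by simpa using hdvd⟩
    have hjΩ : j ∉ Ω := fun h => hj (hΩI h)
    refine ⟨insert j Ω, Finset.insert_subset_insert _ hΩI, ?_, ?_⟩
    · rw [Finset.card_insert_of_notMem hjΩ, card_add]
      have := card_pos.2 h₁
      omega
    · rw [Finset.prod_insert hjΩ, prod_add]
      exact mul_dvd_mul (prod_dvd_prod_of_le ht₁) hdvd

lemma card_le_of_minimal_dvd_prod [CommMonoid M] {s : M} {m : Multiset M} (hs : s ∣ m.prod)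
    (hmin : ∀ m' ≤ m, s ∣ m'.prod → m' = m) {N : ℕ∞}
    (hN : ∀ (n : ℕ) (a : Fin n → M), s ∣ ∏ i, a i →
      ∃ Ω : Finset (Fin n), (Ω.card : ℕ∞) ≤ N ∧ s ∣ ∏ i ∈ Ω, a i) :
    (card m : ℕ∞) ≤ N := by
  set l := m.toList
  have hl : (l : Multiset M) = m := coe_toList m
  have hprod : ∏ i, l.get i = m.prod := by
    rw [Finset.prod_eq_multiset_prod, Fin.univ_val_map, List.ofFn_get, prod_coe, prod_toList]
  obtain ⟨Ω, hcard, hdvd⟩ := hN l.length l.get (hprod ▸ hs)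
  have hΩ : Ω.val.map l.get = m := hmin _ (hl ▸ map_get_le l Ω) hdvd
  rwa [← hΩ, card_map, ← Finset.card_def]

end Multiset

section Factorization

variable {S : Type*} [CommMonoid S]

lemma exists_irreducible_factors_associated
    (hatomic : ∀ a : S, ¬IsUnit a → ∃ m : Multiset S, (∀ x ∈ m, Irreducible x) ∧ m.prod = a)
    (a : S) : ∃ m : Multiset S, (∀ x ∈ m, Irreducible x) ∧ Associated m.prod a := by
  by_cases ha : IsUnit a
  · exact ⟨0, by simp, by simpa using (associated_one_iff_isUnit.2 ha).symm⟩
  · obtain ⟨m, hm, rfl⟩ := hatomic a ha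
    exact ⟨m, hm, Associated.refl _⟩

lemma exists_minimal_factorization_of_dvd_prod
    (hatomic : ∀ a : S, ¬IsUnit a → ∃ m : Multiset S, (∀ x ∈ m, Irreducible x) ∧ m.prod = a)
    {ι : Type*} [Fintype ι] {s : S} {a : ι → S} (hs : s ∣ ∏ i, a i) :
    ∃ t : Multiset S, (∀ x ∈ t, Irreducible x) ∧ s ∣ t.prod ∧
      (∀ t' ≤ t, s ∣ t'.prod → t' = t) ∧
      ∃ Ω : Finset ι, Ω.card ≤ Multiset.card t ∧ s ∣ ∏ i ∈ Ω, a i := by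
  choose f hirr hassoc using fun i => exists_irreducible_factors_associated hatomic (a i)
  have hsf : s ∣ (∑ i, f i).prod := by
    rw [Multiset.prod_sum]
    exact hs.trans (Finset.prod_dvd_prod_of_dvd _ _ fun i _ => (hassoc i).symm.dvd)
  obtain ⟨t, htf, hst, hmin⟩ :=
    exists_minimal_le_of_wellFoundedLT (fun t : Multiset S => s ∣ t.prod) _ hsf
  obtain ⟨Ω, -, hcard, hdvd⟩ := Multiset.exists_finset_card_le_prod_dvd_of_le_sum _ f htf
  refine ⟨t, fun x hx => ?_, hst, fun t' ht' hst' => le_antisymm ht' (hmin hst' ht'), Ω, hcard,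
    hst.trans (hdvd.trans (Finset.prod_dvd_prod_of_dvd _ _ fun i _ => (hassoc i).dvd))⟩
  obtain ⟨i, -, hxi⟩ := Multiset.mem_sum.1 (Multiset.mem_of_le htf hx)
  exact hirr i x hxi

end Factorization

/-- Factorizations are multisets of irreducibles; divisibility in `Z(S)` is the sub-multiset
order. -/
theorem omega_eq_sup_min_lengths_general {S : Type*} [CancelCommMonoid S]
    (hatomic : ∀ a : S, ¬IsUnit a →
      ∃ m : Multiset S, (∀ x ∈ m, Irreducible x) ∧ m.prod = a)
    (s : S) :
    sInf {N : ℕ∞ | ∀ (n : ℕ) (a : Fin n → S), s ∣ ∏ i, a i →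
        ∃ Ω : Finset (Fin n), (Ω.card : ℕ∞) ≤ N ∧ s ∣ ∏ i ∈ Ω, a i}
      =
    sSup {L : ℕ∞ | ∃ m : Multiset S, (∀ x ∈ m, Irreducible x) ∧ s ∣ m.prod ∧
        (∀ m' : Multiset S, m' ≤ m → s ∣ m'.prod → m' = m) ∧
        L = (Multiset.card m : ℕ∞)} := by
  apply le_antisymm
  · refine sInf_le fun n a hs => ?_
    obtain ⟨t, hirr, hst, hmin, Ω, hcard, hdvd⟩ :=
      exists_minimal_factorization_of_dvd_prod hatomic hs
    exact ⟨Ω, (Nat.cast_le.2 hcard).trans (le_sSup ⟨t, hirr, hst, hmin, rfl⟩), hdvd⟩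
  · refine sSup_le ?_
    rintro - ⟨m, -, hs, hmin, rfl⟩
    exact le_sInf fun N hN => Multiset.card_le_of_minimal_dvd_prod hs hmin hN

/-- For a reduced atomic monoid `S` and `s ∈ S`,
`ω(S,s) = sup{ |x| : x ∈ Min(Z(sS)) }`. Factorizations are modelled as multisets
of irreducible elements of `S`, `Z(sS)` being those whose product is divisible by `s`,
minimality being with respect to the divisibility (sub-multiset) order. -/
theorem omega_eq_sup_min_lengths {S : Type*} [CancelCommMonoid S]
    (hred : ∀ u : S, IsUnit u → u = 1)
    (hatomic : ∀ a : S, ¬IsUnit a →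
      ∃ m : Multiset S, (∀ x ∈ m, Irreducible x) ∧ m.prod = a)
    (s : S) :
    sInf {N : ℕ∞ | ∀ (n : ℕ) (a : Fin n → S), s ∣ ∏ i, a i →
        ∃ Ω : Finset (Fin n), (Ω.card : ℕ∞) ≤ N ∧ s ∣ ∏ i ∈ Ω, a i}
      =
    sSup {L : ℕ∞ | ∃ m : Multiset S, (∀ x ∈ m, Irreducible x) ∧ s ∣ m.prod ∧
        (∀ m' : Multiset S, m' ≤ m → s ∣ m'.prod → m' = m) ∧
        L = (Multiset.card m : ℕ∞)} :=
  omega_eq_sup_min_lengths_general hatomic s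
end

section
/- Let S be an atomic monoid. Then the equal catenary degree satisfies c_equal(S) ≤ sup{ |x| : (x,y) ∈ 𝒜(∼_{S,equal}) for some y ∈ Z(S) }, the supremum of the lengths of first components of atoms of the monoid of equal-length relations. -/
open scoped BigOperators

variable {S : Type*} [CancelCommMonoid S] [DecidableEq S]

/-- `z` is a factorization of `a`: a multiset of atoms with product `a`. -/
def IsFactorization (a : S) (z : Multiset S) : Prop :=
  (∀ x ∈ z, Irreducible x) ∧ z.prod = a

/-- The distance between two factorizations:
`d(z,z') = max(|z gcd(z,z')⁻¹|, |z' gcd(z,z')⁻¹|)`. -/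
def fdist (z z' : Multiset S) : ℕ :=
  max (Multiset.card (z - z')) (Multiset.card (z' - z))

/-- Membership in the monoid of equal-length relations `∼_{S,equal}`. -/
def InEqualRel (p : Multiset S × Multiset S) : Prop :=
  (∀ x ∈ p.1, Irreducible x) ∧ (∀ x ∈ p.2, Irreducible x) ∧
    p.1.prod = p.2.prod ∧ Multiset.card p.1 = Multiset.card p.2

/-- Atoms of the monoid of equal-length relations. -/
def IsEqualRelAtom (p : Multiset S × Multiset S) : Prop :=
  InEqualRel p ∧ p ≠ (0, 0) ∧
    ∀ q r : Multiset S × Multiset S, InEqualRel q → InEqualRel r →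
      p = (q.1 + r.1, q.2 + r.2) → q = (0, 0) ∨ r = (0, 0)

/-- The equal catenary degree `c_equal(a)`: the smallest `N` such that any two
factorizations of `a` of equal length can be connected by a chain of factorizations
of `a`, all of that same length, with consecutive distances `≤ N`. -/
noncomputable def cEqual (a : S) : ℕ∞ :=
  sInf {N : ℕ∞ | ∀ z z' : Multiset S, IsFactorization a z → IsFactorization a z' →
    Multiset.card z = Multiset.card z' →
    ∃ (k : ℕ) (c : Fin (k + 1) → Multiset S), c 0 = z ∧ c (Fin.last k) = z' ∧
      (∀ i, IsFactorization a (c i) ∧ Multiset.card (c i) = Multiset.card z) ∧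
      ∀ i : Fin k, (fdist (c i.castSucc) (c i.succ) : ℕ∞) ≤ N}

/-!
Two factorizations `z, z'` of `a` of the same length form an equal-length relation `(z, z')`,
which is a sum of atoms `(x₀, y₀), …, (x_{k-1}, y_{k-1})` of `∼_{S,equal}`. Replacing `xᵢ` by `yᵢ`
one atom at a time walks from `z` to `z'` through factorizations of `a` of that same length, and
the `i`-th step has distance at most `|xᵢ|`.
-/

section Fdist

variable {α : Type*} [DecidableEq α]

theorem fdist_add_left (w x y : Multiset α) : fdist (w + x) (w + y) = fdist x y := by
  simp only [fdist, add_tsub_add_eq_tsub_left]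

theorem fdist_le_card_of_card_eq {x y : Multiset α} (h : Multiset.card x = Multiset.card y) :
    fdist x y ≤ Multiset.card x :=
  max_le (Multiset.card_le_card tsub_le_self) (h ▸ Multiset.card_le_card tsub_le_self)

end Fdist

section EqualRel

variable {M : Type*} [CancelCommMonoid M]

theorem InEqualRel.eq_zero_of_fst_eq_zero {p : Multiset M × Multiset M} (hp : InEqualRel p)
    (h : p.1 = 0) : p = (0, 0) :=
  Prod.ext h (Multiset.card_eq_zero.mp (hp.2.2.2.symm.trans (by rw [h, Multiset.card_zero])))

theorem InEqualRel.exists_sum_atoms {x y : Multiset M} (hxy : InEqualRel (x, y)) :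
    ∃ L : List (Multiset M × Multiset M), (∀ q ∈ L, IsEqualRelAtom q) ∧
      x = (L.map Prod.fst).sum ∧ y = (L.map Prod.snd).sum := by
  induction hn : Multiset.card x using Nat.strong_induction_on generalizing x y with
  | _ n ih =>
    by_cases hx : x = 0
    · obtain ⟨-, rfl⟩ := Prod.ext_iff.mp (hxy.eq_zero_of_fst_eq_zero hx)
      exact ⟨[], by simp [hx]⟩
    by_cases hatom : IsEqualRelAtom (x, y)
    · exact ⟨[(x, y)], by simpa using hatom⟩
    have hne : (x, y) ≠ (0, 0) := fun h => hx (Prod.ext_iff.mp h).1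
    simp only [IsEqualRelAtom, not_and, not_forall, not_or] at hatom
    obtain ⟨q, r, hq, hr, hsplit, hq0, hr0⟩ := hatom hxy hne
    obtain ⟨rfl, rfl⟩ := Prod.ext_iff.mp hsplit
    have hq1 : 0 < Multiset.card q.1 :=
      Multiset.card_pos.mpr fun h => hq0 (hq.eq_zero_of_fst_eq_zero h)
    have hr1 : 0 < Multiset.card r.1 :=
      Multiset.card_pos.mpr fun h => hr0 (hr.eq_zero_of_fst_eq_zero h)
    rw [Multiset.card_add] at hn
    obtain ⟨Lq, hLq, hq₁, hq₂⟩ := ih _ (by omega) hq rfl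
    obtain ⟨Lr, hLr, hr₁, hr₂⟩ := ih _ (by omega) hr rfl
    refine ⟨Lq ++ Lr, fun p hp => (List.mem_append.mp hp).elim (hLq p) (hLr p), ?_, ?_⟩
    · simp [← hq₁, ← hr₁]
    · simp [← hq₂, ← hr₂]

theorem IsFactorization.add_of_inEqualRel {a : M} {w x y : Multiset M}
    (hz : IsFactorization a (w + x)) (hxy : InEqualRel (x, y)) : IsFactorization a (w + y) := by
  refine ⟨fun u hu => ?_, ?_⟩
  · rcases Multiset.mem_add.mp hu with hu | hu
    · exact hz.1 u (Multiset.mem_add.mpr (Or.inl hu))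
    · exact hxy.2.1 u hu
  · rw [Multiset.prod_add, ← hxy.2.2.1, ← Multiset.prod_add, hz.2]

end EqualRel

section SwapChain

variable {α : Type*}

/-- The `j`-th factorization on the way from `Σ xᵢ` to `Σ yᵢ` along `L = [(x₀, y₀), …]`:
the first `j` relations have been applied. -/
def swapChain (L : List (Multiset α × Multiset α)) (j : ℕ) : Multiset α :=
  ((L.take j).map Prod.snd).sum + ((L.drop j).map Prod.fst).sum

theorem swapChain_zero (L : List (Multiset α × Multiset α)) :
    swapChain L 0 = (L.map Prod.fst).sum := by
  simp [swapChain]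

theorem swapChain_length (L : List (Multiset α × Multiset α)) :
    swapChain L L.length = (L.map Prod.snd).sum := by
  simp [swapChain]

theorem swapChain_succ {L : List (Multiset α × Multiset α)} {j : ℕ} (hj : j < L.length) :
    ∃ w, swapChain L j = w + L[j].1 ∧ swapChain L (j + 1) = w + L[j].2 := by
  refine ⟨((L.take j).map Prod.snd).sum + ((L.drop (j + 1)).map Prod.fst).sum, ?_, ?_⟩
  · rw [swapChain, List.drop_eq_getElem_cons hj, List.map_cons, List.sum_cons]
    abel
  · rw [swapChain, List.take_succ_eq_append_getElem hj, List.map_append, List.sum_append]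
    simp only [List.map_cons, List.map_nil, List.sum_cons, List.sum_nil, add_zero]
    abel

theorem fdist_swapChain_succ_le [DecidableEq α] {L : List (Multiset α × Multiset α)} {j : ℕ}
    (hj : j < L.length) (hcard : Multiset.card L[j].1 = Multiset.card L[j].2) :
    fdist (swapChain L j) (swapChain L (j + 1)) ≤ Multiset.card L[j].1 := by
  obtain ⟨w, h₀, h₁⟩ := swapChain_succ hj
  rw [h₀, h₁, fdist_add_left]
  exact fdist_le_card_of_card_eq hcard

theorem isFactorization_swapChain {M : Type*} [CancelCommMonoid M] {a : M}
    {L : List (Multiset M × Multiset M)} (hL : ∀ q ∈ L, InEqualRel q)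
    (ha : IsFactorization a (swapChain L 0)) {j : ℕ} (hj : j ≤ L.length) :
    IsFactorization a (swapChain L j) ∧
      Multiset.card (swapChain L j) = Multiset.card (swapChain L 0) := by
  induction j with
  | zero => exact ⟨ha, rfl⟩
  | succ j ih =>
    obtain ⟨hfac, hcard⟩ := ih (by omega)
    obtain ⟨w, h₀, h₁⟩ := swapChain_succ (L := L) (j := j) (by omega)
    have hrel : InEqualRel (L[j].1, L[j].2) := hL _ (List.getElem_mem _)
    rw [h₀] at hfac hcard
    rw [h₁, ← hcard, Multiset.card_add, Multiset.card_add, hrel.2.2.2]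
    exact ⟨hfac.add_of_inEqualRel hrel, rfl⟩

end SwapChain

theorem cEqual_le_sup_atom_lengths_general :
    (⨆ a : S, cEqual a) ≤
      sSup {n : ℕ∞ | ∃ p : Multiset S × Multiset S, IsEqualRelAtom p ∧
        n = (Multiset.card p.1 : ℕ∞)} := by
  refine iSup_le fun a => sInf_le fun z z' hz hz' hcard => ?_
  obtain ⟨L, hL, rfl, rfl⟩ :=
    InEqualRel.exists_sum_atoms (x := z) (y := z') ⟨hz.1, hz'.1, hz.2.trans hz'.2.symm, hcard⟩
  rw [← swapChain_zero] at hz ⊢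
  refine ⟨L.length, fun j => swapChain L j, rfl, by simp [swapChain_length], fun j =>
    isFactorization_swapChain (fun q hq => (hL q hq).1) hz j.is_le, fun j => ?_⟩
  have hatom := hL _ (List.getElem_mem j.isLt)
  calc (fdist (swapChain L j) (swapChain L (j + 1)) : ℕ∞)
      ≤ Multiset.card L[j].1 := by
        exact_mod_cast fdist_swapChain_succ_le j.isLt hatom.1.2.2.2
    _ ≤ _ := le_sSup (by exact ⟨L[j], hatom, rfl⟩)

/-- `c_equal(S) ≤ sup{ |x| : (x,y) an atom of ∼_{S,equal} }`. -/
theorem cEqual_le_sup_atom_lengths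
    (hatomic : ∀ a : S, ¬IsUnit a →
      ∃ m : Multiset S, (∀ x ∈ m, Irreducible x) ∧ m.prod = a) :
    (⨆ a : S, cEqual a) ≤
      sSup {n : ℕ∞ | ∃ p : Multiset S × Multiset S, IsEqualRelAtom p ∧
        n = (Multiset.card p.1 : ℕ∞)} :=
  cEqual_le_sup_atom_lengths_general
end

section
/- Let S be a reduced atomic monoid. For every atom u of S, the tame degree satisfies t(S,u) ≤ sup{ max(|x|,|y|) : (x,y) ∈ 𝒜(∼_S), x ∈ uZ(S) }. Consequently t(S) ≤ a(S) := sup{ |x| : (x,y) ∈ 𝒜(∼_S) for some y ∈ Z(S) }. -/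
/-!
Let `z, z₀` be factorizations of `a` with `u ∈ z₀`. Decomposing the relation `(z, z₀)` into atoms
of `∼_S` (by induction on its length), some atom `(x, y)` has `u ∈ y` and `x ≤ z`. Then
`z - x + y` is a factorization of `a` containing `u`, at distance at most `max |x| |y|` from `z`.
-/

variable {S : Type*} [CancelCommMonoid S] [DecidableEq S]

/-- Membership in the monoid of relations `∼_S`. -/
def InRel (p : Multiset S × Multiset S) : Prop :=
  (∀ x ∈ p.1, Irreducible x) ∧ (∀ x ∈ p.2, Irreducible x) ∧ p.1.prod = p.2.prod

/-- Atoms of the monoid of relations `∼_S`. -/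
def IsRelAtom (p : Multiset S × Multiset S) : Prop :=
  InRel p ∧ p ≠ (0, 0) ∧
    ∀ q r : Multiset S × Multiset S, InRel q → InRel r →
      p = (q.1 + r.1, q.2 + r.2) → q = (0, 0) ∨ r = (0, 0)

/-- The tame degree `t(a,u)`. -/
noncomputable def tameDeg (a : S) (u : S) : ℕ∞ :=
  sInf {N : ℕ∞ | ∀ z : Multiset S, IsFactorization a z →
    (∃ z₀ : Multiset S, IsFactorization a z₀ ∧ u ∈ z₀) →
    ∃ z' : Multiset S, IsFactorization a z' ∧ u ∈ z' ∧ (fdist z z' : ℕ∞) ≤ N}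

omit [DecidableEq S] in
lemma InRel.swap {p : Multiset S × Multiset S} (hp : InRel p) : InRel p.swap :=
  ⟨hp.2.1, hp.1, hp.2.2.symm⟩

omit [DecidableEq S] in
lemma IsRelAtom.swap {p : Multiset S × Multiset S} (hp : IsRelAtom p) : IsRelAtom p.swap := by
  obtain ⟨hrel, hne, hatom⟩ := hp
  refine ⟨hrel.swap, fun h => hne (by simpa using congrArg Prod.swap h), fun q r hq hr heq => ?_⟩
  have := hatom q.swap r.swap hq.swap hr.swap (by simpa using congrArg Prod.swap heq)
  simpa [Prod.swap_eq_iff_eq_swap] using this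

lemma InRel.exists_sum_isRelAtom {p : Multiset S × Multiset S} (hp : InRel p) :
    ∃ M : Multiset (Multiset S × Multiset S), (∀ q ∈ M, IsRelAtom q) ∧ M.sum = p := by
  induction hn : Multiset.card p.1 + Multiset.card p.2 using Nat.strong_induction_on
    generalizing p with
  | _ n ih =>
    by_cases hp0 : p = (0, 0)
    · exact ⟨0, by simp, by rw [hp0]; rfl⟩
    by_cases hpa : IsRelAtom p
    · exact ⟨{p}, by simpa using hpa, Multiset.sum_singleton p⟩
    obtain ⟨q, r, hq, hr, rfl, hq0, hr0⟩ : ∃ q r : Multiset S × Multiset S, InRel q ∧ InRel r ∧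
        p = (q.1 + r.1, q.2 + r.2) ∧ q ≠ (0, 0) ∧ r ≠ (0, 0) := by
      simpa [IsRelAtom, hp, hp0] using hpa
    have size_pos : ∀ s : Multiset S × Multiset S, s ≠ (0, 0) →
        0 < Multiset.card s.1 + Multiset.card s.2 := by
      rintro ⟨s₁, s₂⟩ hs
      by_contra h
      exact hs (by simp_all)
    have := size_pos q hq0
    have := size_pos r hr0
    simp only [Multiset.card_add] at hn
    obtain ⟨Mq, hMq, rfl⟩ := ih _ (by omega) hq rfl
    obtain ⟨Mr, hMr, rfl⟩ := ih _ (by omega) hr rfl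
    refine ⟨Mq + Mr, fun x hx => ?_, by rw [Multiset.sum_add]; rfl⟩
    rcases Multiset.mem_add.mp hx with h | h
    exacts [hMq x h, hMr x h]

lemma InRel.exists_isRelAtom_fst_le_snd_mem {z z₀ : Multiset S} (h : InRel (z, z₀)) {u : S}
    (hu : u ∈ z₀) : ∃ q : Multiset S × Multiset S, IsRelAtom q ∧ q.1 ≤ z ∧ u ∈ q.2 := by
  obtain ⟨M, hM, hsum⟩ := h.exists_sum_isRelAtom
  have hz : (M.map Prod.fst).sum = z := by rw [← Multiset.fst_sum, hsum]
  have hz₀ : (M.map Prod.snd).sum = z₀ := by rw [← Multiset.snd_sum, hsum]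
  obtain ⟨_, hmap, huq⟩ := Multiset.mem_join.mp (hz₀ ▸ hu)
  obtain ⟨q, hqM, rfl⟩ := Multiset.mem_map.mp hmap
  exact ⟨q, hM q hqM, hz ▸ Multiset.le_sum_of_mem (Multiset.mem_map_of_mem _ hqM), huq⟩

omit [CancelCommMonoid S] in
lemma fdist_sub_add_le {z x y : Multiset S} (hx : x ≤ z) :
    fdist z (z - x + y) ≤ max (Multiset.card x) (Multiset.card y) := by
  have hzx : z - x + x = z := tsub_add_cancel_of_le hx
  have h₁ : z - (z - x + y) ≤ x := by
    rw [tsub_add_eq_tsub_tsub, tsub_tsub_cancel_of_le hx]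
    exact Multiset.sub_le_self _ _
  have h₂ : z - x + y - z ≤ y :=
    calc z - x + y - z = z - x + y - (z - x + x) := by rw [hzx]
      _ = y - x := add_tsub_add_eq_tsub_left _ _ _
      _ ≤ y := Multiset.sub_le_self _ _
  exact max_le_max (Multiset.card_le_card h₁) (Multiset.card_le_card h₂)

lemma IsFactorization.sub_add {a : S} {z : Multiset S} (hz : IsFactorization a z)
    {q : Multiset S × Multiset S} (hq : InRel q) (hle : q.1 ≤ z) :
    IsFactorization a (z - q.1 + q.2) := by
  refine ⟨fun x hx => ?_, ?_⟩
  · rcases Multiset.mem_add.mp hx with h | h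
    exacts [hz.1 x (Multiset.mem_of_le (Multiset.sub_le_self _ _) h), hq.2.1 x h]
  · rw [Multiset.prod_add, ← hq.2.2, ← Multiset.prod_add, tsub_add_cancel_of_le hle, hz.2]

lemma tameDeg_le_sSup_relAtom (a u : S) :
    tameDeg a u ≤ sSup {n : ℕ∞ | ∃ p : Multiset S × Multiset S, IsRelAtom p ∧ u ∈ p.1 ∧
      n = (max (Multiset.card p.1) (Multiset.card p.2) : ℕ∞)} := by
  refine sInf_le fun z hz ⟨z₀, hz₀, hu⟩ => ?_
  obtain ⟨q, hq, hle, huq⟩ :=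
    InRel.exists_isRelAtom_fst_le_snd_mem ⟨hz.1, hz₀.1, hz.2.trans hz₀.2.symm⟩ hu
  refine ⟨z - q.1 + q.2, hz.sub_add hq.1 hle, Multiset.mem_add.mpr (Or.inr huq), ?_⟩
  refine le_trans ?_ (le_sSup ⟨q.swap, hq.swap, huq, rfl⟩)
  calc (fdist z (z - q.1 + q.2) : ℕ∞)
      ≤ (max (Multiset.card q.1) (Multiset.card q.2) : ℕ) := Nat.cast_le.mpr (fdist_sub_add_le hle)
    _ = _ := by rw [Nat.mono_cast.map_max, max_comm]; rfl

omit [DecidableEq S] in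
lemma sSup_maxCard_relAtom_le_sSup_card (u : S) :
    sSup {n : ℕ∞ | ∃ p : Multiset S × Multiset S, IsRelAtom p ∧ u ∈ p.1 ∧
        n = (max (Multiset.card p.1) (Multiset.card p.2) : ℕ∞)} ≤
      sSup {n : ℕ∞ | ∃ p : Multiset S × Multiset S, IsRelAtom p ∧
        n = (Multiset.card p.1 : ℕ∞)} := by
  refine sSup_le ?_
  rintro n ⟨p, hp, -, rfl⟩
  exact max_le (le_sSup ⟨p, hp, rfl⟩) (le_sSup ⟨p.swap, hp.swap, rfl⟩)

theorem tame_le_sup_relation_atoms_general :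
    (∀ u : S, Irreducible u →
      (⨆ a : S, tameDeg a u) ≤
        sSup {n : ℕ∞ | ∃ p : Multiset S × Multiset S, IsRelAtom p ∧ u ∈ p.1 ∧
          n = (max (Multiset.card p.1) (Multiset.card p.2) : ℕ∞)}) ∧
    (⨆ u ∈ {u : S | Irreducible u}, ⨆ a : S, tameDeg a u) ≤
      sSup {n : ℕ∞ | ∃ p : Multiset S × Multiset S, IsRelAtom p ∧
        n = (Multiset.card p.1 : ℕ∞)} :=
  ⟨fun u _ => iSup_le fun a => tameDeg_le_sSup_relAtom a u,
    iSup₂_le fun u _ => (iSup_le fun a => tameDeg_le_sSup_relAtom a u).trans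
      (sSup_maxCard_relAtom_le_sSup_card u)⟩

/-- for every atom `u`,
`t(S,u) ≤ sup{ max(|x|,|y|) : (x,y) ∈ 𝒜(∼_S), x ∈ uZ(S) }`, and consequently
`t(S) ≤ a(S) = sup{ |x| : (x,y) ∈ 𝒜(∼_S) }`. -/
theorem tame_le_sup_relation_atoms
    (hatomic : ∀ a : S, ¬IsUnit a →
      ∃ m : Multiset S, (∀ x ∈ m, Irreducible x) ∧ m.prod = a)
    (hred : ∀ u : S, IsUnit u → u = 1) :
    (∀ u : S, Irreducible u →
      (⨆ a : S, tameDeg a u) ≤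
        sSup {n : ℕ∞ | ∃ p : Multiset S × Multiset S, IsRelAtom p ∧ u ∈ p.1 ∧
          n = (max (Multiset.card p.1) (Multiset.card p.2) : ℕ∞)}) ∧
    (⨆ u ∈ {u : S | Irreducible u}, ⨆ a : S, tameDeg a u) ≤
      sSup {n : ℕ∞ | ∃ p : Multiset S × Multiset S, IsRelAtom p ∧
        n = (Multiset.card p.1 : ℕ∞)} :=
  tame_le_sup_relation_atoms_general
end

section
/- Let S be a reduced atomic monoid, a ∈ S, z ∈ Z(a), and u,v ∈ 𝒜(S). Suppose t(a, 𝒜(S)) = d(z, Z(a) ∩ uZ(S)) > 0, that v divides z in Z(S), and that uv divides a in S. Then t(v⁻¹a, 𝒜(S)) ≥ t(a, 𝒜(S)). -/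
variable {S : Type*} [CancelCommMonoid S] [DecidableEq S]

/-- `t(a, 𝒜(S))`: the supremum over atoms `u` of `t(a,u)`. -/
noncomputable def tameDegA (a : S) : ℕ∞ :=
  ⨆ u ∈ {u : S | Irreducible u}, tameDeg a u

/-- Lemma 5.4.1: if `t(a,𝒜(S)) = d(z, Z(a) ∩ uZ(S)) > 0`, `v` occurs in
`z` and `uv ∣ a`, then `t(v⁻¹a, 𝒜(S)) ≥ t(a, 𝒜(S))`. -/
theorem tameDeg_ge_of_divide
    (hatomic : ∀ a : S, ¬IsUnit a →
      ∃ m : Multiset S, (∀ x ∈ m, Irreducible x) ∧ m.prod = a)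
    (hred : ∀ u : S, IsUnit u → u = 1)
    (a : S) (z : Multiset S) (u v : S)
    (hu : Irreducible u) (hv : Irreducible v)
    (hz : IsFactorization a z)
    (hdist : tameDegA a =
      sInf {n : ℕ∞ | ∃ z' : Multiset S, IsFactorization a z' ∧ u ∈ z' ∧
        n = (fdist z z' : ℕ∞)})
    (hpos : 0 < tameDegA a)
    (hvz : v ∈ z) (huv : u * v ∣ a) :
    ∀ b : S, v * b = a → tameDegA a ≤ tameDegA b := by
  intro b hb
  have hbu : u ∣ b := by
    obtain ⟨c, hc⟩ := huv
    refine ⟨c, mul_left_cancel (a := v) ?_⟩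
    rw [hb, hc, mul_assoc, mul_left_comm]
  obtain ⟨c, hc⟩ := hbu
  have hw0 : ∃ w₀ : Multiset S, IsFactorization b w₀ ∧ u ∈ w₀ := by
    by_cases hcu : IsUnit c
    · refine ⟨{u}, ⟨?_, ?_⟩, Multiset.mem_singleton_self u⟩
      · intro x hx; rw [Multiset.mem_singleton] at hx; subst hx; exact hu
      · simp [hc, hred c hcu]
    · obtain ⟨m, hm1, hm2⟩ := hatomic c hcu
      refine ⟨u ::ₘ m, ⟨?_, ?_⟩, Multiset.mem_cons_self u m⟩
      · intro x hx
        rcases Multiset.mem_cons.mp hx with h | h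
        · subst h; exact hu
        · exact hm1 x h
      · simp [hm2, hc]
  set z₁ := z.erase v with hz₁
  have hzc : z = v ::ₘ z₁ := (Multiset.cons_erase hvz).symm
  have hz₁fact : IsFactorization b z₁ := by
    constructor
    · intro x hx; exact hz.1 x (Multiset.mem_of_mem_erase hx)
    · refine mul_left_cancel (a := v) ?_
      rw [hb, ← hz.2, hzc, Multiset.prod_cons]
  have step : tameDegA a ≤ tameDeg b u := by
    refine le_sInf ?_
    intro N hN
    obtain ⟨z', hz', hu', hdN⟩ := hN z₁ hz₁fact hw0
    have hfa : IsFactorization a (v ::ₘ z') := by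
      constructor
      · intro x hx
        rcases Multiset.mem_cons.mp hx with h | h
        · subst h; exact hv
        · exact hz'.1 x h
      · rw [Multiset.prod_cons, hz'.2, hb]
    have key : tameDegA a ≤ (fdist z (v ::ₘ z') : ℕ∞) := by
      rw [hdist]
      exact sInf_le ⟨v ::ₘ z', hfa, Multiset.mem_cons_of_mem hu', rfl⟩
    have heq : fdist z (v ::ₘ z') = fdist z₁ z' := by
      rw [hzc]; simp [fdist, Multiset.sub_cons, Multiset.erase_cons_head]
    calc tameDegA a ≤ _ := key
      _ ≤ N := by rw [heq]; exact hdN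
  exact step.trans (le_biSup (fun w => tameDeg b w) hu)
end

section
/- Let S be an atomic monoid with S ≠ S^× which has finite accepted elasticity (there exists a ∈ S with ρ(a) = ρ(S) < ∞). Then the set M = { k ∈ ℕ : ρ_k(S)/k = ρ(S) } ∪ {0} is a submonoid of (ℕ₀,+) distinct from {0}. -/
variable {S : Type*} [CancelCommMonoid S]

/-- The set of lengths `L(a)` of `a ∈ S`. -/
def lengths (a : S) : Set ℕ :=
  {n | ∃ m : Multiset S, (∀ x ∈ m, Irreducible x) ∧ m.prod = a ∧ Multiset.card m = n}

/-- `V_k(S)`: the set of all `m` such that some product of `k` atoms equals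
a product of `m` atoms (the union of all sets of lengths containing `k`). -/
def unionLengths (k : ℕ) : Set ℕ :=
  {m | ∃ x y : Multiset S, (∀ u ∈ x, Irreducible u) ∧ (∀ u ∈ y, Irreducible u) ∧
    Multiset.card x = k ∧ Multiset.card y = m ∧ x.prod = y.prod}

private lemma mem_unionLengths_le {r : ℚ}
    (hub : ∀ (a : S) (k l : ℕ), k ∈ lengths a → l ∈ lengths a → (l : ℚ) ≤ r * k)
    {k m : ℕ} (hm : m ∈ unionLengths (S := S) k) : (m : ℚ) ≤ r * k := by
  obtain ⟨x, y, hx, hy, hk, hm', heq⟩ := hm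
  exact hub x.prod k m ⟨x, hx, rfl, hk⟩ ⟨y, hy, heq.symm, hm'⟩

/-- if `S` is atomic, not a group, and has finite accepted elasticity
`ρ(S) = r` (i.e. `r` bounds all ratios of lengths and is attained by some element),
then `M = {k : ρ_k(S)/k = ρ(S)} ∪ {0}` is a submonoid of `(ℕ₀,+)` distinct
from `{0}`.  Since `ρ_k(S) = sup V_k(S)` is attained here, the defining condition is
expressed as: `V_k(S)` has a greatest element `m` with `m/k = r`. -/
theorem accepted_elasticity_rho_monoid
    (hatomic : ∀ a : S, ¬IsUnit a →
      ∃ m : Multiset S, (∀ x ∈ m, Irreducible x) ∧ m.prod = a)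
    (hne : ∃ a : S, ¬IsUnit a)
    (r : ℚ)
    (hub : ∀ (a : S) (k l : ℕ), k ∈ lengths a → l ∈ lengths a → (l : ℚ) ≤ r * k)
    (hacc : ∃ (a : S) (k l : ℕ), ¬IsUnit a ∧ IsLeast (lengths a) k ∧
      IsGreatest (lengths a) l ∧ (l : ℚ) = r * k) :
    (∀ k l : ℕ,
        k ∈ ({k : ℕ | 0 < k ∧ ∃ m, IsGreatest (unionLengths (S := S) k) m ∧
          (m : ℚ) = r * k} ∪ {0}) →
        l ∈ ({k : ℕ | 0 < k ∧ ∃ m, IsGreatest (unionLengths (S := S) k) m ∧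
          (m : ℚ) = r * k} ∪ {0}) →
        k + l ∈ ({k : ℕ | 0 < k ∧ ∃ m, IsGreatest (unionLengths (S := S) k) m ∧
          (m : ℚ) = r * k} ∪ {0})) ∧
    ({k : ℕ | 0 < k ∧ ∃ m, IsGreatest (unionLengths (S := S) k) m ∧
        (m : ℚ) = r * k} ∪ {0}) ≠ ({0} : Set ℕ) := by
  constructor
  · intro k l hk hl
    rcases hk with hk | hk
    · rcases hl with hl | hl
      · -- both positive
        obtain ⟨hkpos, mk, ⟨hmkmem, hmkub⟩, hmkeq⟩ := hk
        obtain ⟨hlpos, ml, ⟨hmlmem, hmlub⟩, hmleq⟩ := hl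
        left
        refine ⟨by omega, mk + ml, ⟨?_, ?_⟩, ?_⟩
        · obtain ⟨x₁, y₁, hx₁, hy₁, hcx₁, hcy₁, he₁⟩ := hmkmem
          obtain ⟨x₂, y₂, hx₂, hy₂, hcx₂, hcy₂, he₂⟩ := hmlmem
          refine ⟨x₁ + x₂, y₁ + y₂, ?_, ?_, ?_, ?_, ?_⟩
          · intro u hu; rcases Multiset.mem_add.mp hu with h | h
            exacts [hx₁ u h, hx₂ u h]
          · intro u hu; rcases Multiset.mem_add.mp hu with h | h
            exacts [hy₁ u h, hy₂ u h]
          · simp [hcx₁, hcx₂]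
          · simp [hcy₁, hcy₂]
          · simp [Multiset.prod_add, he₁, he₂]
        · intro m hm
          have h1 : (m : ℚ) ≤ r * ((k + l : ℕ) : ℚ) := mem_unionLengths_le hub hm
          push_cast at h1
          have h2 : ((mk + ml : ℕ) : ℚ) = r * (k + l) := by
            push_cast
            push_cast at hmkeq hmleq
            rw [hmkeq, hmleq]; ring
          exact_mod_cast h1.trans_eq h2.symm
        · push_cast
          push_cast at hmkeq hmleq
          rw [hmkeq, hmleq]; ring
      · simp only [Set.mem_singleton_iff] at hl
        subst hl; simp only [add_zero]; exact Or.inl hk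
    · simp only [Set.mem_singleton_iff] at hk
      subst hk; simp only [zero_add]; exact hl
  · obtain ⟨a, k, l, ha, ⟨hkmem, hklb⟩, ⟨hlmem, hlub⟩, heq⟩ := hacc
    have hkpos : 0 < k := by
      rcases Nat.eq_zero_or_pos k with h | h
      · exfalso
        obtain ⟨m, hm, hprod, hcard⟩ := hkmem
        rw [h] at hcard
        rw [Multiset.card_eq_zero.mp hcard, Multiset.prod_zero] at hprod
        exact ha (hprod ▸ isUnit_one)
      · exact h
    intro hcontra
    have hkin : k ∈ ({k : ℕ | 0 < k ∧ ∃ m, IsGreatest (unionLengths (S := S) k) m ∧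
        (m : ℚ) = r * k} ∪ {0}) := by
      left
      refine ⟨hkpos, l, ⟨?_, ?_⟩, heq⟩
      · obtain ⟨x, hx, hxp, hxc⟩ := hkmem
        obtain ⟨y, hy, hyp, hyc⟩ := hlmem
        exact ⟨x, y, hx, hy, hxc, hyc, by rw [hxp, hyp]⟩
      · intro m hm
        obtain ⟨x, y, hx, hy, hxc, hyc, hxy⟩ := hm
        have h1 : (m : ℚ) ≤ r * k := hub x.prod k m ⟨x, hx, rfl, hxc⟩ ⟨y, hy, hxy.symm, hyc⟩
        rw [← heq] at h1
        exact_mod_cast h1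
    rw [hcontra] at hkin
    simp only [Set.mem_singleton_iff] at hkin
    omega
end

section
/- Let S be an atomic monoid with S ≠ S^× which has finite accepted elasticity. Then M' = { k ∈ ℕ : λ_k(S)/k = 1/ρ(S) } ∪ {0} is a submonoid of (ℕ₀,+) distinct from {0}. -/
variable {S : Type*} [CancelCommMonoid S]

/-- if `S` is atomic, not a group, with finite accepted elasticity
`ρ(S) = r`, then `M' = {k : λ_k(S)/k = 1/ρ(S)} ∪ {0}` is a submonoid of `(ℕ₀,+)`
distinct from `{0}`.  Here `λ_k(S) = min V_k(S)` and the defining condition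
`λ_k(S)/k = 1/r` is expressed as `λ_k(S) · r = k`. -/
theorem accepted_elasticity_lambda_monoid
    (hatomic : ∀ a : S, ¬IsUnit a →
      ∃ m : Multiset S, (∀ x ∈ m, Irreducible x) ∧ m.prod = a)
    (hne : ∃ a : S, ¬IsUnit a)
    (r : ℚ)
    (hub : ∀ (a : S) (k l : ℕ), k ∈ lengths a → l ∈ lengths a → (l : ℚ) ≤ r * k)
    (hacc : ∃ (a : S) (k l : ℕ), ¬IsUnit a ∧ IsLeast (lengths a) k ∧
      IsGreatest (lengths a) l ∧ (l : ℚ) = r * k) :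
    (∀ k l : ℕ,
        k ∈ ({k : ℕ | 0 < k ∧ ∃ m, IsLeast (unionLengths (S := S) k) m ∧
          (m : ℚ) * r = k} ∪ {0}) →
        l ∈ ({k : ℕ | 0 < k ∧ ∃ m, IsLeast (unionLengths (S := S) k) m ∧
          (m : ℚ) * r = k} ∪ {0}) →
        k + l ∈ ({k : ℕ | 0 < k ∧ ∃ m, IsLeast (unionLengths (S := S) k) m ∧
          (m : ℚ) * r = k} ∪ {0})) ∧
    ({k : ℕ | 0 < k ∧ ∃ m, IsLeast (unionLengths (S := S) k) m ∧
        (m : ℚ) * r = k} ∪ {0}) ≠ ({0} : Set ℕ) := by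
  -- basic facts
  obtain ⟨a, k₀, l₀, hna, hleast, hgreatest, heq⟩ := hacc
  obtain ⟨mk, hmk_irr, hmk_prod, hmk_card⟩ := hleast.1
  obtain ⟨ml, hml_irr, hml_prod, hml_card⟩ := hgreatest.1
  have hk0 : 0 < k₀ := by
    rcases Nat.eq_zero_or_pos k₀ with h | h
    · exfalso
      apply hna
      rw [← hmk_prod]
      have : mk = 0 := Multiset.card_eq_zero.mp (hmk_card.trans h)
      rw [this, Multiset.prod_zero]
      exact isUnit_one
    · exact h
  have hr : 0 < r := by
    by_contra h
    push_neg at h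
    have h1 : (l₀ : ℚ) ≤ 0 := by
      rw [heq]
      exact mul_nonpos_of_nonpos_of_nonneg h (by positivity)
    have h2 : (0 : ℚ) < k₀ := by exact_mod_cast hk0
    have h3 : (k₀ : ℚ) ≤ l₀ := by
      exact_mod_cast hleast.2 hgreatest.1
    linarith
  have hl0 : 0 < l₀ := by
    have : (0 : ℚ) < l₀ := by
      rw [heq]; positivity
    exact_mod_cast this
  -- key bound from hub: n ≤ r * m for m ∈ unionLengths n
  have key : ∀ n m : ℕ, m ∈ unionLengths (S := S) n → (n : ℚ) ≤ r * m := by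
    intro n m hm
    obtain ⟨x, y, hx, hy, hxc, hyc, hxy⟩ := hm
    exact hub x.prod m n ⟨y, hy, hxy.symm, hyc⟩ ⟨x, hx, rfl, hxc⟩
  constructor
  · rintro k l (⟨hkpos, mk', hmk', hmkr⟩ | hk) (⟨hlpos, ml', hml', hmlr⟩ | hl)
    · left
      refine ⟨by omega, mk' + ml', ⟨?_, ?_⟩, ?_⟩
      · obtain ⟨x1, y1, hx1, hy1, hx1c, hy1c, hp1⟩ := hmk'.1
        obtain ⟨x2, y2, hx2, hy2, hx2c, hy2c, hp2⟩ := hml'.1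
        refine ⟨x1 + x2, y1 + y2, ?_, ?_, ?_, ?_, ?_⟩
        · intro u hu; rcases Multiset.mem_add.mp hu with h | h
          · exact hx1 u h
          · exact hx2 u h
        · intro u hu; rcases Multiset.mem_add.mp hu with h | h
          · exact hy1 u h
          · exact hy2 u h
        · simp [hx1c, hx2c]
        · simp [hy1c, hy2c]
        · simp [Multiset.prod_add, hp1, hp2]
      · intro m hm
        have h1 : ((k + l : ℕ) : ℚ) ≤ r * m := key _ _ hm
        have h2 : ((mk' + ml' : ℕ) : ℚ) * r = ((k + l : ℕ) : ℚ) := by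
          push_cast
          push_cast at hmkr hmlr
          linarith
        have : ((mk' + ml' : ℕ) : ℚ) ≤ m := by
          rw [mul_comm] at h2
          nlinarith
        exact_mod_cast this
      · push_cast
        push_cast at hmkr hmlr
        linarith
    · simp only [Set.mem_singleton_iff] at hl
      subst hl
      exact Or.inl ⟨hkpos, mk', hmk', hmkr⟩
    · simp only [Set.mem_singleton_iff] at hk
      subst hk
      rw [zero_add]
      exact Or.inl ⟨hlpos, ml', hml', hmlr⟩
    · simp only [Set.mem_singleton_iff] at hk hl
      subst hk; subst hl
      exact Or.inr rfl
  · intro hcontra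
    have hmem : l₀ ∈ ({k : ℕ | 0 < k ∧ ∃ m, IsLeast (unionLengths (S := S) k) m ∧
        (m : ℚ) * r = k} ∪ {0}) := by
      left
      refine ⟨hl0, k₀, ⟨⟨ml, mk, hml_irr, hmk_irr, hml_card, hmk_card,
        hml_prod.trans hmk_prod.symm⟩, ?_⟩, by rw [mul_comm]; exact heq.symm⟩
      intro m hm
      have h1 : (l₀ : ℚ) ≤ r * m := key _ _ hm
      have : (k₀ : ℚ) ≤ m := by
        rw [heq] at h1
        exact le_of_mul_le_mul_left h1 hr
      exact_mod_cast this
    rw [hcontra] at hmem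
    simp only [Set.mem_singleton_iff] at hmem
    omega
end

section
/- Let S be a reduced atomic monoid, a ∈ S, and let z = u₁⋯u_l ∈ Z(a) and z' = v₁⋯v_ρ ∈ Z(a) be factorizations with l ∈ ℕ and ρ = ρ_l(S) (so z' realizes the maximal length among elements admitting a factorization of length l). If there is no k ∈ [1, l−1] with ρ_k(S) + ρ_{l−k}(S) = ρ_l(S), then the pair (z, z') is an atom of the monoid of relations ∼_S. -/
variable {S : Type*} [CancelCommMonoid S]

lemma unionLengths_add {m m' k k' : ℕ} (h : m ∈ unionLengths (S := S) k)
    (h' : m' ∈ unionLengths (S := S) k') :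
    m + m' ∈ unionLengths (S := S) (k + k') := by
  obtain ⟨x, y, hx, hy, hxk, hym, hp⟩ := h
  obtain ⟨x', y', hx', hy', hxk', hym', hp'⟩ := h'
  refine ⟨x + x', y + y', ?_, ?_, ?_, ?_, ?_⟩
  · intro u hu; rcases Multiset.mem_add.1 hu with h | h
    exacts [hx u h, hx' u h]
  · intro u hu; rcases Multiset.mem_add.1 hu with h | h
    exacts [hy u h, hy' u h]
  · simp [hxk, hxk']
  · simp [hym, hym']
  · simp [hp, hp']

lemma mem_unionLengths_self {x : Multiset S} (hx : ∀ u ∈ x, Irreducible u) :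
    Multiset.card x ∈ unionLengths (S := S) (Multiset.card x) :=
  ⟨x, x, hx, hx, rfl, rfl, rfl⟩

lemma exists_sub_of_card {α : Type*} (s : Multiset α) (n : ℕ) (h : n ≤ Multiset.card s) :
    ∃ t : Multiset α, (∀ u ∈ t, u ∈ s) ∧ Multiset.card t = n := by
  refine ⟨(s.toList.take n : List α), ?_, ?_⟩
  · intro u hu
    have : u ∈ s.toList := List.mem_of_mem_take (by simpa using hu)
    simpa using this
  · simp only [Multiset.coe_card, List.length_take, Multiset.length_toList]
    omega

/-- let `S` be a reduced atomic monoid, `a ∈ S`, and let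
`z, z' ∈ Z(a)` with `|z| = l ≥ 1` and `|z'| = ρ_l(S)` (the greatest element of
`V_l(S)`). If there is no `k ∈ [1, l−1]` with `ρ_k(S) + ρ_{l−k}(S) = ρ_l(S)`,
then `(z, z')` is an atom of the monoid of relations `∼_S`. -/
theorem pair_is_relation_atom
    (hred : ∀ u : S, IsUnit u → u = 1)
    (hatomic : ∀ a : S, ¬IsUnit a →
      ∃ m : Multiset S, (∀ x ∈ m, Irreducible x) ∧ m.prod = a)
    (a : S) (z z' : Multiset S) (l ρ : ℕ) (hl : 0 < l)
    (hz : (∀ u ∈ z, Irreducible u) ∧ z.prod = a ∧ Multiset.card z = l)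
    (hz' : (∀ u ∈ z', Irreducible u) ∧ z'.prod = a ∧ Multiset.card z' = ρ)
    (hρ : IsGreatest (unionLengths (S := S) l) ρ)
    (hnosplit : ∀ k : ℕ, 0 < k → k < l → ∀ rk rlk : ℕ,
      IsGreatest (unionLengths (S := S) k) rk →
      IsGreatest (unionLengths (S := S) (l - k)) rlk → rk + rlk ≠ ρ) :
    ¬(z = 0 ∧ z' = 0) ∧
      ∀ x₁ x₂ y₁ y₂ : Multiset S, z = x₁ + x₂ → z' = y₁ + y₂ →
        x₁.prod = y₁.prod → x₂.prod = y₂.prod →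
        (x₁ = 0 ∧ y₁ = 0) ∨ (x₂ = 0 ∧ y₂ = 0) := by
  obtain ⟨hzirr, hzprod, hzcard⟩ := hz
  obtain ⟨hz'irr, hz'prod, hz'card⟩ := hz'
  constructor
  · rintro ⟨h0, -⟩
    rw [h0] at hzcard
    simp at hzcard
    omega
  intro x₁ x₂ y₁ y₂ hzx hzy h1 h2
  have hx₁irr : ∀ u ∈ x₁, Irreducible u := fun u hu =>
    hzirr u (by rw [hzx]; exact Multiset.mem_add.2 (Or.inl hu))
  have hx₂irr : ∀ u ∈ x₂, Irreducible u := fun u hu =>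
    hzirr u (by rw [hzx]; exact Multiset.mem_add.2 (Or.inr hu))
  have hy₁irr : ∀ u ∈ y₁, Irreducible u := fun u hu =>
    hz'irr u (by rw [hzy]; exact Multiset.mem_add.2 (Or.inl hu))
  have hy₂irr : ∀ u ∈ y₂, Irreducible u := fun u hu =>
    hz'irr u (by rw [hzy]; exact Multiset.mem_add.2 (Or.inr hu))
  have hcard : Multiset.card x₁ + Multiset.card x₂ = l := by
    rw [← hzcard, hzx]; simp
  have hcard' : Multiset.card y₁ + Multiset.card y₂ = ρ := by
    rw [← hz'card, hzy]; simp
  set k := Multiset.card x₁ with hk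
  -- helper: prod = 1 of irreducibles forces the multiset to be 0
  have prod_one_eq_zero : ∀ w : Multiset S, (∀ u ∈ w, Irreducible u) →
      w.prod = 1 → w = 0 := by
    intro w hw hwp
    by_contra hne
    obtain ⟨u, hu⟩ := Multiset.exists_mem_of_ne_zero hne
    exact (hw u hu).not_isUnit (isUnit_of_dvd_one (hwp ▸ Multiset.dvd_prod hu))
  rcases Nat.eq_zero_or_pos k with hk0 | hkpos
  · left
    have hx₁0 : x₁ = 0 := Multiset.card_eq_zero.1 hk0
    refine ⟨hx₁0, prod_one_eq_zero y₁ hy₁irr ?_⟩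
    rw [← h1, hx₁0, Multiset.prod_zero]
  rcases Nat.lt_or_ge k l with hkl | hkl
  · -- main case: 0 < k < l, derive contradiction
    exfalso
    -- V_k and V_{l-k} are nonempty and bounded above by ρ
    have hbdd : ∀ j : ℕ, 0 < j → j < l → BddAbove (unionLengths (S := S) j) := by
      intro j hj0 hjl
      refine ⟨ρ, fun m hm => ?_⟩
      have hx2' : Multiset.card x₂ ∈ unionLengths (S := S) (Multiset.card x₂) :=
        mem_unionLengths_self hx₂irr
      -- pick a multiset of irreducibles of card l - j : use z? need one of card l - j
      -- combine m ∈ V_j with (l-j) ∈ V_{l-j}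
      obtain ⟨c, hc1, hc2⟩ := exists_sub_of_card z (l - j) (by omega)
      have hcirr : ∀ u ∈ c, Irreducible u := fun u hu => hzirr u (hc1 u hu)
      have hself : Multiset.card c ∈ unionLengths (S := S) (Multiset.card c) :=
        mem_unionLengths_self hcirr
      have := unionLengths_add hm hself
      rw [hc2] at this
      have hjl' : j + (l - j) = l := by omega
      rw [hjl'] at this
      have := hρ.2 this
      omega
    have hne : ∀ j : ℕ, 0 < j → j < l → (unionLengths (S := S) j).Nonempty := by
      intro j hj0 hjl
      obtain ⟨c, hc1, hc2⟩ := exists_sub_of_card z j (by omega)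
      have hcirr : ∀ u ∈ c, Irreducible u := fun u hu => hzirr u (hc1 u hu)
      exact ⟨Multiset.card c, hc2 ▸ mem_unionLengths_self hcirr⟩
    have hlk0 : 0 < l - k := by omega
    have hlkl : l - k < l := by omega
    set rk := sSup (unionLengths (S := S) k) with hrk
    set rlk := sSup (unionLengths (S := S) (l - k)) with hrlk
    have hrkG : IsGreatest (unionLengths (S := S) k) rk :=
      ⟨Nat.sSup_mem (hne k hkpos hkl) (hbdd k hkpos hkl),
        fun m hm => le_csSup (hbdd k hkpos hkl) hm⟩
    have hrlkG : IsGreatest (unionLengths (S := S) (l - k)) rlk :=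
      ⟨Nat.sSup_mem (hne _ hlk0 hlkl) (hbdd _ hlk0 hlkl),
        fun m hm => le_csSup (hbdd _ hlk0 hlkl) hm⟩
    have hsum : rk + rlk ≤ ρ := by
      have := unionLengths_add hrkG.1 hrlkG.1
      have hkl' : k + (l - k) = l := by omega
      rw [hkl'] at this
      exact hρ.2 this
    have hneq : rk + rlk ≠ ρ := hnosplit k hkpos hkl rk rlk hrkG hrlkG
    -- card y₁ ∈ V_k, card y₂ ∈ V_{l-k}
    have hy1mem : Multiset.card y₁ ∈ unionLengths (S := S) k :=
      ⟨x₁, y₁, hx₁irr, hy₁irr, rfl, rfl, h1⟩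
    have hy2mem : Multiset.card y₂ ∈ unionLengths (S := S) (l - k) :=
      ⟨x₂, y₂, hx₂irr, hy₂irr, by omega, rfl, h2⟩
    have h1le := hrkG.2 hy1mem
    have h2le := hrlkG.2 hy2mem
    omega
  · right
    have hx₂0 : x₂ = 0 := Multiset.card_eq_zero.1 (by omega)
    refine ⟨hx₂0, prod_one_eq_zero y₂ hy₂irr ?_⟩
    rw [← h2, hx₂0, Multiset.prod_zero]
end

section
/- Let S = ⟨n₁,…,n_t⟩ be a numerical monoid with atoms 1 < n₁ < … < n_t. Then { k ∈ ℕ : ρ_k(S)/k = ρ(S) } ∪ {0} = (lcm(n₁,n_t)/n_t)·ℕ₀, where ρ(S) = n_t/n₁. -/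
open scoped BigOperators

/-- `V_k(S)` for the numerical monoid generated by `n : Fin t → ℕ`:
the set of `m` such that some sum of `k` generators equals a sum of `m` generators. -/
def numUnionLengths {t : ℕ} (n : Fin t → ℕ) (k : ℕ) : Set ℕ :=
  {m | ∃ x y : Fin t → ℕ, (∑ i, x i) = k ∧ (∑ i, y i) = m ∧
    (∑ i, x i * n i) = ∑ i, y i * n i}

/-- for a numerical monoid `S = ⟨n₁,…,n_t⟩` with `1 < n₁ < … < n_t`,
`{k : ρ_k(S)/k = ρ(S) = n_t/n₁} ∪ {0} = (lcm(n₁,n_t)/n_t)·ℕ₀`.  Since `ρ_k(S)` is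
attained, the condition `ρ_k(S)/k = n_t/n₁` reads: `V_k(S)` has a greatest element `m`
with `m·n₁ = k·n_t`. -/
theorem numerical_rho_set_eq_multiples {t : ℕ} (ht : 0 < t) (n : Fin t → ℕ)
    (hmono : StrictMono n) (h1 : 1 < n ⟨0, ht⟩)
    (hgcd : Finset.univ.gcd n = 1)
    (hatom : ∀ i, ¬ (n i ∈ AddSubmonoid.closure (Set.range n \ {n i}))) :
    ({k : ℕ | 0 < k ∧ ∃ m, IsGreatest (numUnionLengths n k) m ∧
        m * n ⟨0, ht⟩ = k * n ⟨t - 1, by omega⟩} ∪ {0}) =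
      {k : ℕ | (Nat.lcm (n ⟨0, ht⟩) (n ⟨t - 1, by omega⟩) / n ⟨t - 1, by omega⟩) ∣ k} := by
  have ht' : t - 1 < t := by omega
  set a := n ⟨0, ht⟩ with ha
  have hb' : True := trivial
  -- abbreviations (definitional, so `exact` works across proof terms)
  let b := n (⟨t - 1, ht'⟩ : Fin t)
  have hle : ∀ i : Fin t, a ≤ n i := fun i =>
    hmono.monotone (by simp [Fin.le_def])
  have hge : ∀ i : Fin t, n i ≤ b := fun i =>
    hmono.monotone (by simp only [Fin.le_def]; omega)
  have ha0 : 0 < a := by omega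
  have hb0 : 0 < b := lt_of_lt_of_le ha0 (hle _)
  set d := Nat.gcd a b with hd
  have hd0 : 0 < d := Nat.gcd_pos_of_pos_left _ ha0
  have hAd : a / d * d = a := Nat.div_mul_cancel (Nat.gcd_dvd_left a b)
  have hBd : b / d * d = b := Nat.div_mul_cancel (Nat.gcd_dvd_right a b)
  have hlcm : Nat.lcm a b / b * b = Nat.lcm a b := Nat.div_mul_cancel (Nat.dvd_lcm_right a b)
  have hA : Nat.lcm a b / b = a / d := by
    have h2 : d * Nat.lcm a b = a * b := Nat.gcd_mul_lcm a b
    have key : Nat.lcm a b / b * (b * d) = a / d * (b * d) := by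
      calc Nat.lcm a b / b * (b * d) = (Nat.lcm a b / b * b) * d := by ring
        _ = d * Nat.lcm a b := by rw [hlcm]; ring
        _ = (a / d * d) * b := by rw [h2, hAd]
        _ = a / d * (b * d) := by ring
    exact Nat.eq_of_mul_eq_mul_right (by positivity) key
  have hcop : Nat.Coprime (a / d) (b / d) := Nat.coprime_div_gcd_div_gcd hd0
  ext k
  simp only [Set.mem_union, Set.mem_setOf_eq, Set.mem_singleton_iff]
  constructor
  · rintro (⟨hk, m, _, heq⟩ | rfl)
    · have heq' : m * a = k * b := heq
      have hmul : m * (a / d) * d = k * (b / d) * d := by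
        calc m * (a / d) * d = m * (a / d * d) := by ring
          _ = k * b := by rw [hAd]; exact heq'
          _ = k * (b / d * d) := by rw [hBd]
          _ = k * (b / d) * d := by ring
      have hmul' : m * (a / d) = k * (b / d) := Nat.eq_of_mul_eq_mul_right hd0 hmul
      have hdvd : a / d ∣ k := by
        have : a / d ∣ k * (b / d) := ⟨m, by rw [← hmul']; ring⟩
        exact (Nat.Coprime.dvd_of_dvd_mul_right hcop this)
      have : Nat.lcm a b / b ∣ k := by rw [hA]; exact hdvd
      exact this
    · exact dvd_zero _
  · intro hdvd
    have hdvd0 : Nat.lcm a b / b ∣ k := hdvd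
    rw [hA] at hdvd0
    rcases Nat.eq_zero_or_pos k with rfl | hk
    · exact Or.inr rfl
    · left
      obtain ⟨j, rfl⟩ := hdvd0
      refine ⟨hk, b / d * j, ⟨⟨?_, ?_⟩, ?_⟩⟩
      · refine ⟨fun i => if i = ⟨t - 1, ht'⟩ then a / d * j else 0,
          fun i => if i = ⟨0, ht⟩ then b / d * j else 0, ?_, ?_, ?_⟩
        · simp
        · simp
        · have key : b / d * j * a = a / d * j * b := by
            calc b / d * j * a = (a / d * d) * (b / d * j) := by rw [hAd]; ring
              _ = (b / d * d) * (a / d * j) := by ring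
              _ = a / d * j * b := by rw [hBd]; ring
          simp only [ite_mul, zero_mul, Finset.sum_ite_eq', Finset.mem_univ, if_true]
          exact key.symm
      · rintro m' ⟨x, y, hx, hy, hxy⟩
        have l1 : m' * a ≤ ∑ i, y i * n i := by
          calc m' * a = ∑ i, y i * a := by rw [← Finset.sum_mul, hy]
            _ ≤ ∑ i, y i * n i := Finset.sum_le_sum fun i _ => Nat.mul_le_mul_left _ (hle i)
        have l2 : (∑ i, x i * n i) ≤ (a / d * j) * b := by
          calc (∑ i, x i * n i) ≤ ∑ i, x i * b :=
              Finset.sum_le_sum fun i _ => Nat.mul_le_mul_left _ (hge i)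
            _ = (a / d * j) * b := by rw [← Finset.sum_mul, hx]
        have key : b / d * j * a = a / d * j * b := by
          calc b / d * j * a = (a / d * d) * (b / d * j) := by rw [hAd]; ring
            _ = (b / d * d) * (a / d * j) := by ring
            _ = a / d * j * b := by rw [hBd]; ring
        have : m' * a ≤ (b / d * j) * a := by
          rw [key]; exact le_trans l1 (le_trans (le_of_eq hxy.symm) l2)
        exact Nat.le_of_mul_le_mul_right this ha0
      · show b / d * j * a = a / d * j * b
        calc b / d * j * a = (a / d * d) * (b / d * j) := by rw [hAd]; ring
          _ = (b / d * d) * (a / d * j) := by ring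
          _ = a / d * j * b := by rw [hBd]; ring
end

section
/- Let q be a prime, p₁ < p₂ positive integers with p₁ + p₂ = q and gcd(p₁,p₂) = 1, and let k ≥ 2 be an integer not divisible by q with p₁k < q < p₂k. For the numerical monoid S_k = ⟨p₁k, q, p₂k⟩ one has ω(S_k) = max{k, p₂+1} and t(S_k) = k + p₂ − 1. In particular, if k ≥ p₂ + 1, then ω(S_k) < t(S_k) and 1 < t(S_k)/ω(S_k) = 1 + (p₂−1)/k < 2. -/
/-! Write `n₁ = p₁k`, `n₃ = p₂k`. Since `q` is prime, `q ∤ k` and `gcd(p₁, p₂) = 1`, two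
factorizations `(x, y, w)` and `(x', y', w')` of the same element differ by an integer combination
of the relations `n₁ + n₃ = k·q` and `p₂·n₁ = p₁·n₃`. Reading off signs, `u` divides
`x·n₁ + y·q + w·n₃` exactly when `(x, y, w)` dominates one of a few minimal patterns
(for `q`: `q`, `n₁ + n₃`, `(p₂+1)·n₁`, `(p₁+1)·n₃`). Each pattern can be exchanged for an
equal sum of atoms containing `u`; the largest pattern has `max k (p₂+1)` atoms, which bounds
`ω`, and the largest exchange moves `k + p₂ - 1` atoms, which bounds the tame degree. The
patterns `(p₂+1)·n₁` and `k·q`, and the element `(p₁+1)·n₃`, whose only factorization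
containing `q` is `(p₂-1)·n₁ + k·q`, show that the bounds are attained. -/

open scoped BigOperators

/-- `u` divides `x` in the additive submonoid of `ℕ` generated by `A`. -/
def dvdIn (A : Set ℕ) (u x : ℕ) : Prop :=
  ∃ c ∈ AddSubmonoid.closure A, u + c = x

/-- `ω(S,u)` for the numerical monoid `S` generated by `A`: the smallest `N` such that
whenever `u` divides (in `S`) a sum of elements of `S`, it divides a subsum of at most
`N` of the summands. -/
noncomputable def omegaNum (A : Set ℕ) (u : ℕ) : ℕ∞ :=
  sInf {N : ℕ∞ | ∀ (n : ℕ) (a : Fin n → ℕ), (∀ i, a i ∈ AddSubmonoid.closure A) →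
    dvdIn A u (∑ i, a i) →
    ∃ Ω : Finset (Fin n), (Ω.card : ℕ∞) ≤ N ∧ dvdIn A u (∑ i ∈ Ω, a i)}

/-- `ω(S)`: the supremum over the atoms (here: the generators in `A`). -/
noncomputable def omegaNumS (A : Set ℕ) : ℕ∞ :=
  ⨆ u ∈ A, omegaNum A u

/-- `z` is a factorization of `a`: a multiset of generators summing to `a`. -/
def NumFact (A : Set ℕ) (a : ℕ) (z : Multiset ℕ) : Prop :=
  (∀ v ∈ z, v ∈ A) ∧ z.sum = a

/-- Distance between factorizations. -/
def numDist (z z' : Multiset ℕ) : ℕ :=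
  max (Multiset.card (z - z')) (Multiset.card (z' - z))

/-- The tame degree `t(a,u)` in the numerical monoid generated by `A`. -/
noncomputable def tameNum (A : Set ℕ) (a u : ℕ) : ℕ∞ :=
  sInf {N : ℕ∞ | ∀ z : Multiset ℕ, NumFact A a z →
    (∃ z₀ : Multiset ℕ, NumFact A a z₀ ∧ u ∈ z₀) →
    ∃ z' : Multiset ℕ, NumFact A a z' ∧ u ∈ z' ∧ (numDist z z' : ℕ∞) ≤ N}

/-- The tame degree `t(S)` of the numerical monoid generated by `A`. -/
noncomputable def tameNumS (A : Set ℕ) : ℕ∞ :=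
  ⨆ u ∈ A, ⨆ a : ℕ, tameNum A a u

open Multiset

theorem AddSubmonoid.mem_closure_triple {M : Type*} [AddCommMonoid M] (a b c m : M) :
    m ∈ AddSubmonoid.closure ({a, b, c} : Set M) ↔ ∃ x y w : ℕ, x • a + y • b + w • c = m := by
  rw [← Set.singleton_union, AddSubmonoid.closure_union, AddSubmonoid.mem_sup]
  simp only [AddSubmonoid.mem_closure_singleton, AddSubmonoid.mem_closure_pair]
  constructor
  · rintro ⟨_, ⟨x, rfl⟩, _, ⟨y, w, rfl⟩, rfl⟩
    exact ⟨x, y, w, add_assoc _ _ _⟩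
  · rintro ⟨x, y, w, rfl⟩
    exact ⟨_, ⟨x, rfl⟩, _, ⟨y, w, rfl⟩, (add_assoc _ _ _).symm⟩

theorem dvdIn_triple_iff {a b c u m : ℕ} :
    dvdIn {a, b, c} u m ↔ ∃ x y w : ℕ, u + (x * a + y * b + w * c) = m := by
  simp only [dvdIn, AddSubmonoid.mem_closure_triple, smul_eq_mul]
  constructor
  · rintro ⟨_, ⟨x, y, w, rfl⟩, h⟩
    exact ⟨x, y, w, h⟩
  · rintro ⟨x, y, w, h⟩
    exact ⟨_, ⟨x, y, w, rfl⟩, h⟩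

theorem dvdIn_sum_of_mem {A : Set ℕ} {u : ℕ} {z : Multiset ℕ} (hz : ∀ v ∈ z, v ∈ A)
    (hu : u ∈ z) : dvdIn A u z.sum :=
  ⟨_, AddSubmonoid.multiset_sum_mem _ _ fun v hv =>
    AddSubmonoid.subset_closure (hz v (mem_of_mem_erase hv)), sum_erase hu⟩

theorem dvdIn.exists_numFact {A : Set ℕ} {u m : ℕ} (h : dvdIn A u m) (hu : u ∈ A) :
    ∃ z, NumFact A m z ∧ u ∈ z := by
  obtain ⟨c, hc, rfl⟩ := h
  obtain ⟨z, hzA, rfl⟩ := AddSubmonoid.exists_multiset_of_mem_closure hc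
  refine ⟨u ::ₘ z, ⟨?_, sum_cons u z⟩, mem_cons_self u z⟩
  simpa only [mem_cons, forall_eq_or_imp] using ⟨hu, hzA⟩

theorem Multiset.exists_subset_card_le_of_le_sum {ι α : Type*} [DecidableEq ι] [DecidableEq α]
    (z : ι → Multiset α) (t : Finset ι) {s : Multiset α} (h : s ≤ ∑ i ∈ t, z i) :
    ∃ Ω ⊆ t, Ω.card ≤ card s ∧ s ≤ ∑ i ∈ Ω, z i := by
  induction t using Finset.induction_on generalizing s with
  | empty => exact ⟨∅, subset_refl _, Nat.zero_le _, h⟩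
  | insert i t hi ih =>
    rw [Finset.sum_insert hi, ← tsub_le_iff_left] at h
    obtain ⟨Ω, hΩt, hcard, hle⟩ := ih h
    by_cases hsub : s - z i = s
    · exact ⟨Ω, hΩt.trans (Finset.subset_insert i t), hsub ▸ hcard, hsub ▸ hle⟩
    · have hlt : card (s - z i) < card s := card_lt_card (lt_of_le_of_ne tsub_le_self hsub)
      have hiΩ : i ∉ Ω := fun h => hi (hΩt h)
      refine ⟨insert i Ω, Finset.insert_subset_insert i hΩt, ?_, ?_⟩
      · rw [Finset.card_insert_of_notMem hiΩ]; omega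
      · rw [Finset.sum_insert hiΩ]
        exact le_add_tsub.trans (add_le_add le_rfl hle)

theorem numDist_sub_add_le {z s s' : Multiset ℕ} (hs : s ≤ z) :
    numDist z (z - s + s') ≤ max (card s) (card s') := by
  have hz : z = z - s + s := (tsub_add_cancel_of_le hs).symm
  generalize z - s = r at hz ⊢
  subst hz
  rw [numDist, add_tsub_add_eq_tsub_left, add_tsub_add_eq_tsub_left]
  exact max_le_max (card_le_card tsub_le_self) (card_le_card tsub_le_self)

/-- Replacing `s` by `s'` inside a factorization gives a factorization of the same element
that contains `u`. -/
def IsExchange (A : Set ℕ) (u : ℕ) (s s' : Multiset ℕ) : Prop :=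
  (∀ v ∈ s', v ∈ A) ∧ u ∈ s' ∧ s.sum = s'.sum

def HasExchanges (A : Set ℕ) (u N M : ℕ) : Prop :=
  ∀ z : Multiset ℕ, (∀ v ∈ z, v ∈ A) → dvdIn A u z.sum →
    ∃ s ≤ z, ∃ s', IsExchange A u s s' ∧ card s ≤ N ∧ card s' ≤ M

section Bounds

variable {A : Set ℕ} {u : ℕ} {s s' z : Multiset ℕ}

theorem IsExchange.numFact {a : ℕ} (he : IsExchange A u s s') (hz : NumFact A a z) (hs : s ≤ z) :
    NumFact A a (z - s + s') := by
  refine ⟨fun v hv => ?_, ?_⟩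
  · rcases mem_add.1 hv with hv | hv
    exacts [hz.1 v (mem_of_le tsub_le_self hv), he.1 v hv]
  · rw [sum_add, ← he.2.2, ← sum_add, tsub_add_cancel_of_le hs, hz.2]

theorem IsExchange.mem_sub_add (he : IsExchange A u s s') : u ∈ z - s + s' :=
  mem_add.2 (Or.inr he.2.1)

theorem HasExchanges.omegaNum_le {N M : ℕ} (h : HasExchanges A u N M) : omegaNum A u ≤ N := by
  refine sInf_le fun n a ha hdvd => ?_
  choose z hzA hza using fun i => AddSubmonoid.exists_multiset_of_mem_closure (ha i)
  have hsum (Ω : Finset (Fin n)) : (∑ i ∈ Ω, z i).sum = ∑ i ∈ Ω, a i := by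
    rw [Multiset.sum_sum]
    exact Finset.sum_congr rfl fun i _ => hza i
  have hA (Ω : Finset (Fin n)) : ∀ v ∈ ∑ i ∈ Ω, z i, v ∈ A := fun v hv => by
    obtain ⟨i, -, hi⟩ := Multiset.mem_sum.1 hv
    exact hzA i v hi
  obtain ⟨s, hs, s', he, hcard, -⟩ := h _ (hA Finset.univ) (by rwa [hsum])
  obtain ⟨Ω, -, hΩ, hsΩ⟩ := exists_subset_card_le_of_le_sum z Finset.univ hs
  have hz' := he.numFact ⟨hA Ω, rfl⟩ hsΩ
  refine ⟨Ω, by exact_mod_cast hΩ.trans hcard, ?_⟩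
  rw [← hsum, ← hz'.2]
  exact dvdIn_sum_of_mem hz'.1 he.mem_sub_add

theorem HasExchanges.tameNum_le {N M : ℕ} (h : HasExchanges A u N M) (a : ℕ) :
    tameNum A a u ≤ (max N M : ℕ) := by
  refine sInf_le fun z hz ⟨z₀, hz₀, hu⟩ => ?_
  have hdvd : dvdIn A u z.sum := hz.2 ▸ hz₀.2 ▸ dvdIn_sum_of_mem hz₀.1 hu
  obtain ⟨s, hs, s', he, hN, hM⟩ := h z hz.1 hdvd
  refine ⟨z - s + s', he.numFact hz hs, he.mem_sub_add, ?_⟩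
  exact_mod_cast (numDist_sub_add_le hs).trans (max_le_max hN hM)

theorem le_omegaNum_of_nsmul {v n : ℕ} (hv : v ∈ AddSubmonoid.closure A)
    (hn : dvdIn A u (n * v)) (hmin : ∀ m < n, ¬ dvdIn A u (m * v)) :
    (n : ℕ∞) ≤ omegaNum A u := by
  refine le_sInf fun N hN => ?_
  obtain ⟨Ω, hcard, hdvd⟩ := hN n (fun _ => v) (fun _ => hv) (by simpa using hn)
  simp only [Finset.sum_const, smul_eq_mul] at hdvd
  exact le_trans (by exact_mod_cast not_lt.1 fun h => hmin _ h hdvd) hcard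

theorem le_tameNum {a N : ℕ} (hz : NumFact A a z) (hu : ∃ z₀, NumFact A a z₀ ∧ u ∈ z₀)
    (h : ∀ z', NumFact A a z' → u ∈ z' → N ≤ numDist z z') : (N : ℕ∞) ≤ tameNum A a u := by
  refine le_sInf fun M hM => ?_
  obtain ⟨z', hz', hu', hd⟩ := hM z hz hu
  exact le_trans (by exact_mod_cast h z' hz' hu') hd

end Bounds

theorem omegaNum_le_omegaNumS {A : Set ℕ} {u : ℕ} (hu : u ∈ A) : omegaNum A u ≤ omegaNumS A :=
  le_iSup₂ (f := fun u _ => omegaNum A u) u hu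

theorem tameNum_le_tameNumS {A : Set ℕ} {a u : ℕ} (hu : u ∈ A) : tameNum A a u ≤ tameNumS A :=
  (le_iSup (fun a => tameNum A a u) a).trans (le_iSup₂ (f := fun u _ => ⨆ a, tameNum A a u) u hu)

def replicate₃ {α : Type*} (a b c : α) (x y w : ℕ) : Multiset α :=
  replicate x a + replicate y b + replicate w c

theorem sum_replicate₃ {a b c x y w : ℕ} :
    (replicate₃ a b c x y w).sum = x * a + y * b + w * c := by
  simp [replicate₃, sum_replicate]

section Replicate₃

variable {α : Type*} {a b c : α} {x y w : ℕ}

theorem card_replicate₃ : card (replicate₃ a b c x y w) = x + y + w := by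
  simp [replicate₃]

theorem mem_triple_of_mem_replicate₃ {v : α} (hv : v ∈ replicate₃ a b c x y w) :
    v ∈ ({a, b, c} : Set α) := by
  simp only [replicate₃, mem_add, mem_replicate] at hv
  simp only [Set.mem_insert_iff, Set.mem_singleton_iff]
  tauto

variable [DecidableEq α]

theorem count_replicate₃ (v : α) : count v (replicate₃ a b c x y w) =
    (if v = a then x else 0) + (if v = b then y else 0) + (if v = c then w else 0) := by
  simp only [replicate₃, count_add, count_replicate, eq_comm]

theorem replicate₃_le_iff (hab : a ≠ b) (hac : a ≠ c) (hbc : b ≠ c) {z : Multiset α} :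
    replicate₃ a b c x y w ≤ z ↔ x ≤ count a z ∧ y ≤ count b z ∧ w ≤ count c z := by
  simp only [le_iff_count, count_replicate₃]
  refine ⟨fun h => ⟨?_, ?_, ?_⟩, fun ⟨hx, hy, hw⟩ v => ?_⟩
  · simpa [hab, hac] using h a
  · simpa [hab.symm, hbc] using h b
  · simpa [hac.symm, hbc.symm] using h c
  · by_cases hva : v = a <;> by_cases hvb : v = b <;> by_cases hvc : v = c <;> simp_all

theorem replicate₃_sub (hab : a ≠ b) (hac : a ≠ c) (hbc : b ≠ c) (x' y' w' : ℕ) :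
    replicate₃ a b c x y w - replicate₃ a b c x' y' w' =
      replicate₃ a b c (x - x') (y - y') (w - w') := by
  ext v
  simp only [count_sub, count_replicate₃]
  by_cases hva : v = a <;> by_cases hvb : v = b <;> by_cases hvc : v = c <;> simp_all

theorem eq_replicate₃_count (hab : a ≠ b) (hac : a ≠ c) (hbc : b ≠ c) {z : Multiset α}
    (hz : ∀ v ∈ z, v ∈ ({a, b, c} : Set α)) :
    z = replicate₃ a b c (count a z) (count b z) (count c z) := by
  ext v
  rw [count_replicate₃]
  by_cases hva : v = a <;> by_cases hvb : v = b <;> by_cases hvc : v = c <;> simp_all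
  exact fun hv => by simpa [hva, hvb, hvc] using hz v hv

end Replicate₃

section Relations

variable {q p₁ p₂ k x y w : ℕ}

theorem exists_relation_of_eq (hq : q.Prime) (hsum : p₁ + p₂ = q) (hcop : Nat.Coprime p₁ p₂)
    (hknd : ¬ q ∣ k) (hp₂ : p₂ ≠ 0) {x' y' w' : ℕ}
    (h : x * (p₁ * k) + y * q + w * (p₂ * k) = x' * (p₁ * k) + y' * q + w' * (p₂ * k)) :
    ∃ m j : ℤ, (x : ℤ) = x' + m + j * p₂ ∧ (y : ℤ) = y' - k * m ∧ (w : ℤ) = w' + m - j * p₁ := by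
  have hZ : (x : ℤ) * (p₁ * k) + y * q + w * (p₂ * k) = x' * (p₁ * k) + y' * q + w' * (p₂ * k) := by
    exact_mod_cast h
  have hsumZ : (p₁ : ℤ) + p₂ = q := by exact_mod_cast hsum
  have hq0 : (q : ℤ) ≠ 0 := by exact_mod_cast hq.ne_zero
  have hp₂0 : (p₂ : ℤ) ≠ 0 := by exact_mod_cast hp₂
  have hdvd : (q : ℤ) ∣ k * ((x - x') * p₁ + (w - w') * p₂) := ⟨y' - y, by linear_combination hZ⟩
  obtain ⟨m, hm⟩ := ((Nat.prime_iff_prime_int.mp hq).dvd_or_dvd hdvd).resolve_left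
    (by exact_mod_cast hknd)
  have hy : (y : ℤ) = y' - k * m := mul_right_cancel₀ hq0 (by linear_combination hZ - k * hm)
  have hp₂dvd : (p₂ : ℤ) ∣ (x - x' - m) * p₁ := ⟨m - w + w', by linear_combination hm - m * hsumZ⟩
  obtain ⟨j, hj⟩ := (Int.isCoprime_iff_gcd_eq_one.2 (by simpa [Nat.gcd_comm] using hcop)
    ).dvd_of_dvd_mul_right hp₂dvd
  refine ⟨m, j, by linear_combination hj, hy, ?_⟩
  exact mul_right_cancel₀ hp₂0 (by linear_combination hm - m * hsumZ - p₁ * hj)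


theorem cases_of_dvdIn_q (hq : q.Prime) (hsum : p₁ + p₂ = q) (hcop : Nat.Coprime p₁ p₂)
    (hknd : ¬ q ∣ k) (hp₂ : p₂ ≠ 0)
    (h : dvdIn {p₁ * k, q, p₂ * k} q (x * (p₁ * k) + y * q + w * (p₂ * k))) :
    1 ≤ y ∨ (1 ≤ x ∧ 1 ≤ w) ∨ p₂ + 1 ≤ x ∨ p₁ + 1 ≤ w := by
  obtain ⟨x', y', w', h⟩ := dvdIn_triple_iff.1 h
  obtain ⟨m, j, hx, hy, hw⟩ := exists_relation_of_eq hq hsum hcop hknd hp₂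
    (x := x) (y := y) (w := w) (x' := x') (y' := y' + 1) (w' := w') (by linarith)
  rcases le_or_gt m 0 with hm | hm
  · have : (k : ℤ) * m ≤ 0 := mul_nonpos_of_nonneg_of_nonpos (by positivity) hm
    omega
  rcases lt_trichotomy j 0 with hj | rfl | hj
  · have : (p₁ : ℤ) ≤ -(j * p₁) := by nlinarith
    omega
  · omega
  · have : (p₂ : ℤ) ≤ j * p₂ := by nlinarith
    omega

theorem cases_of_dvdIn_left (hq : q.Prime) (hsum : p₁ + p₂ = q) (hcop : Nat.Coprime p₁ p₂)
    (hknd : ¬ q ∣ k) (hp₂ : p₂ ≠ 0)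
    (h : dvdIn {p₁ * k, q, p₂ * k} (p₁ * k) (x * (p₁ * k) + y * q + w * (p₂ * k))) :
    1 ≤ x ∨ k ≤ y ∨ p₁ ≤ w := by
  obtain ⟨x', y', w', h⟩ := dvdIn_triple_iff.1 h
  obtain ⟨m, j, hx, hy, hw⟩ := exists_relation_of_eq hq hsum hcop hknd hp₂
    (x := x) (y := y) (w := w) (x' := x' + 1) (y' := y') (w' := w') (by linarith)
  rcases lt_or_ge m 0 with hm | hm
  · have : (k : ℤ) ≤ -(k * m) := by nlinarith
    omega
  rcases lt_or_ge j 0 with hj | hj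
  · have : (p₁ : ℤ) ≤ -(j * p₁) := by nlinarith
    omega
  · have : 0 ≤ j * (p₂ : ℤ) := by positivity
    omega

theorem cases_of_dvdIn_right (hq : q.Prime) (hsum : p₁ + p₂ = q) (hcop : Nat.Coprime p₁ p₂)
    (hknd : ¬ q ∣ k) (hp₂ : p₂ ≠ 0)
    (h : dvdIn {p₁ * k, q, p₂ * k} (p₂ * k) (x * (p₁ * k) + y * q + w * (p₂ * k))) :
    1 ≤ w ∨ k ≤ y ∨ p₂ ≤ x := by
  obtain ⟨x', y', w', h⟩ := dvdIn_triple_iff.1 h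
  obtain ⟨m, j, hx, hy, hw⟩ := exists_relation_of_eq hq hsum hcop hknd hp₂
    (x := x) (y := y) (w := w) (x' := x') (y' := y') (w' := w' + 1) (by linarith)
  rcases lt_or_ge m 0 with hm | hm
  · have : (k : ℤ) ≤ -(k * m) := by nlinarith
    omega
  rcases le_or_gt j 0 with hj | hj
  · have : j * (p₁ : ℤ) ≤ 0 := mul_nonpos_of_nonpos_of_nonneg hj (by positivity)
    omega
  · have : (p₂ : ℤ) ≤ j * p₂ := by nlinarith
    omega

theorem eq_of_eq_succ_mul_right (hq : q.Prime) (hsum : p₁ + p₂ = q) (hcop : Nat.Coprime p₁ p₂)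
    (hknd : ¬ q ∣ k) (hp₂ : p₂ ≠ 0)
    (hp₁ : 0 < p₁) (hy : 1 ≤ y)
    (h : x * (p₁ * k) + y * q + w * (p₂ * k) = (p₁ + 1) * (p₂ * k)) :
    x = p₂ - 1 ∧ y = k ∧ w = 0 := by
  obtain ⟨m, j, hx, hy', hw⟩ := exists_relation_of_eq hq hsum hcop hknd hp₂
    (x := x) (y := y) (w := w) (x' := 0) (y' := 0) (w' := p₁ + 1) (by linarith)
  have hm : m < 0 := by
    by_contra! hm
    have : 0 ≤ (k : ℤ) * m := mul_nonneg (by positivity) hm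
    omega
  have hj : 0 < j := by
    by_contra! hj
    have : j * (p₂ : ℤ) ≤ 0 := mul_nonpos_of_nonpos_of_nonneg hj (by positivity)
    omega
  have hj₁ : j = 1 := by
    by_contra hj₁
    have : 2 * (p₁ : ℤ) ≤ j * p₁ := mul_le_mul_of_nonneg_right (by omega) (by positivity)
    omega
  subst hj₁
  have hm₁ : m = -1 := by omega
  subst hm₁
  omega

end Relations

theorem exists_exchange_replicate₃ {a b c u N M : ℕ} (hab : a ≠ b) (hac : a ≠ c) (hbc : b ≠ c)
    {z : Multiset ℕ} (x y w x' y' w' : ℕ)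
    (hle : x ≤ count a z ∧ y ≤ count b z ∧ w ≤ count c z)
    (hsum : x * a + y * b + w * c = x' * a + y' * b + w' * c)
    (hu : u ∈ replicate₃ a b c x' y' w') (hN : x + y + w ≤ N) (hM : x' + y' + w' ≤ M) :
    ∃ s ≤ z, ∃ s', IsExchange {a, b, c} u s s' ∧ card s ≤ N ∧ card s' ≤ M :=
  ⟨_, (replicate₃_le_iff hab hac hbc).2 hle, _,
    ⟨fun _ => mem_triple_of_mem_replicate₃, hu, by rw [sum_replicate₃, sum_replicate₃, hsum]⟩,
    card_replicate₃.trans_le hN, card_replicate₃.trans_le hM⟩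

structure IsSkParams (q p₁ p₂ k : ℕ) : Prop where
  prime : q.Prime
  add_eq : p₁ + p₂ = q
  coprime : Nat.Coprime p₁ p₂
  not_dvd : ¬ q ∣ k
  pos : 0 < p₁
  lt : p₁ < p₂
  two_le : 2 ≤ k
  left_lt : p₁ * k < q
  lt_right : q < p₂ * k

namespace IsSkParams

variable {q p₁ p₂ k : ℕ}

theorem hasExchanges_q (H : IsSkParams q p₁ p₂ k) :
    HasExchanges {p₁ * k, q, p₂ * k} q (max k (p₂ + 1)) (k + p₂ - 1) := by
  obtain ⟨hq, hsum, hcop, hknd, hp₁, hp, hk, h₁, h₂⟩ := H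
  have hne := (h₁.trans h₂).ne
  intro z hz hdvd
  rw [eq_replicate₃_count h₁.ne hne h₂.ne hz, sum_replicate₃] at hdvd
  rcases cases_of_dvdIn_q hq hsum hcop hknd (by omega) hdvd with hy | ⟨hx, hw⟩ | hx | hw
  · exact exists_exchange_replicate₃ h₁.ne hne h₂.ne 0 1 0 0 1 0 ⟨by omega, hy, by omega⟩
      rfl (by simp [replicate₃]) (by omega) (by omega)
  · exact exists_exchange_replicate₃ h₁.ne hne h₂.ne 1 0 1 0 k 0 ⟨hx, by omega, hw⟩
      (by subst hsum; ring) (by simp [replicate₃, mem_replicate]; omega) (by omega) (by omega)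
  · obtain ⟨e, rfl⟩ : ∃ e, p₁ = e + 1 := ⟨p₁ - 1, by omega⟩
    exact exists_exchange_replicate₃ h₁.ne hne h₂.ne (p₂ + 1) 0 0 0 k e ⟨hx, by omega, by omega⟩
      (by subst hsum; ring) (by simp [replicate₃, mem_replicate]; omega) (by omega) (by omega)
  · obtain ⟨f, rfl⟩ : ∃ f, p₂ = f + 1 := ⟨p₂ - 1, by omega⟩
    exact exists_exchange_replicate₃ h₁.ne hne h₂.ne 0 0 (p₁ + 1) f k 0 ⟨by omega, by omega, hw⟩
      (by subst hsum; ring) (by simp [replicate₃, mem_replicate]; omega) (by omega) (by omega)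

theorem hasExchanges_left (H : IsSkParams q p₁ p₂ k) :
    HasExchanges {p₁ * k, q, p₂ * k} (p₁ * k) (max k (p₂ + 1)) (k + p₂ - 1) := by
  obtain ⟨hq, hsum, hcop, hknd, hp₁, hp, hk, h₁, h₂⟩ := H
  have hne := (h₁.trans h₂).ne
  intro z hz hdvd
  rw [eq_replicate₃_count h₁.ne hne h₂.ne hz, sum_replicate₃] at hdvd
  rcases cases_of_dvdIn_left hq hsum hcop hknd (by omega) hdvd with hx | hy | hw
  · exact exists_exchange_replicate₃ h₁.ne hne h₂.ne 1 0 0 1 0 0 ⟨hx, by omega, by omega⟩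
      rfl (by simp [replicate₃]) (by omega) (by omega)
  · exact exists_exchange_replicate₃ h₁.ne hne h₂.ne 0 k 0 1 0 1 ⟨by omega, hy, by omega⟩
      (by subst hsum; ring) (by simp [replicate₃]) (by omega) (by omega)
  · exact exists_exchange_replicate₃ h₁.ne hne h₂.ne 0 0 p₁ p₂ 0 0 ⟨by omega, by omega, hw⟩
      (by ring) (by simp [replicate₃, mem_replicate]; omega) (by omega) (by omega)

theorem hasExchanges_right (H : IsSkParams q p₁ p₂ k) :
    HasExchanges {p₁ * k, q, p₂ * k} (p₂ * k) (max k (p₂ + 1)) (k + p₂ - 1) := by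
  obtain ⟨hq, hsum, hcop, hknd, hp₁, hp, hk, h₁, h₂⟩ := H
  have hne := (h₁.trans h₂).ne
  intro z hz hdvd
  rw [eq_replicate₃_count h₁.ne hne h₂.ne hz, sum_replicate₃] at hdvd
  rcases cases_of_dvdIn_right hq hsum hcop hknd (by omega) hdvd with hw | hy | hx
  · exact exists_exchange_replicate₃ h₁.ne hne h₂.ne 0 0 1 0 0 1 ⟨by omega, by omega, hw⟩
      rfl (by simp [replicate₃]) (by omega) (by omega)
  · exact exists_exchange_replicate₃ h₁.ne hne h₂.ne 0 k 0 1 0 1 ⟨by omega, hy, by omega⟩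
      (by subst hsum; ring) (by simp [replicate₃]) (by omega) (by omega)
  · exact exists_exchange_replicate₃ h₁.ne hne h₂.ne p₂ 0 0 0 0 p₁ ⟨hx, by omega, by omega⟩
      (by ring) (by simp [replicate₃, mem_replicate]; omega) (by omega) (by omega)


theorem hasExchanges (H : IsSkParams q p₁ p₂ k) {u : ℕ} (hu : u ∈ ({p₁ * k, q, p₂ * k} : Set ℕ)) :
    HasExchanges {p₁ * k, q, p₂ * k} u (max k (p₂ + 1)) (k + p₂ - 1) := by
  rcases hu with rfl | rfl | rfl
  exacts [H.hasExchanges_left, H.hasExchanges_q, H.hasExchanges_right]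

theorem le_omegaNum_q (H : IsSkParams q p₁ p₂ k) :
    ((p₂ + 1 : ℕ) : ℕ∞) ≤ omegaNum {p₁ * k, q, p₂ * k} q := by
  obtain ⟨hq, hsum, hcop, hknd, hp₁, hp, hk, -, -⟩ := H
  refine le_omegaNum_of_nsmul (v := p₁ * k) (n := p₂ + 1) (AddSubmonoid.subset_closure (by simp)) ?_
    fun m hm hdvd => ?_
  · obtain ⟨e, rfl⟩ : ∃ e, p₁ = e + 1 := ⟨p₁ - 1, by omega⟩
    obtain ⟨c, rfl⟩ : ∃ c, k = c + 1 := ⟨k - 1, by omega⟩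
    exact dvdIn_triple_iff.2 ⟨0, c, e, by subst hsum; ring⟩
  · have := cases_of_dvdIn_q hq hsum hcop hknd (by omega) (x := m) (y := 0) (w := 0)
      (by simpa using hdvd)
    omega

theorem le_omegaNum_left (H : IsSkParams q p₁ p₂ k) :
    (k : ℕ∞) ≤ omegaNum {p₁ * k, q, p₂ * k} (p₁ * k) := by
  obtain ⟨hq, hsum, hcop, hknd, hp₁, hp, -, -, -⟩ := H
  refine le_omegaNum_of_nsmul (v := q) (n := k) (AddSubmonoid.subset_closure (by simp)) ?_
    fun m hm hdvd => ?_
  · exact dvdIn_triple_iff.2 ⟨0, 0, 1, by subst hsum; ring⟩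
  · have := cases_of_dvdIn_left hq hsum hcop hknd (by omega) (x := 0) (y := m) (w := 0)
      (by simpa using hdvd)
    omega

theorem le_tameNum_q (H : IsSkParams q p₁ p₂ k) :
    ((k + p₂ - 1 : ℕ) : ℕ∞) ≤ tameNum {p₁ * k, q, p₂ * k} ((p₁ + 1) * (p₂ * k)) q := by
  obtain ⟨hq, hsum, hcop, hknd, hp₁, hp, hk, h₁, h₂⟩ := H
  have hne := (h₁.trans h₂).ne
  have hfact (x y w : ℕ) : NumFact {p₁ * k, q, p₂ * k} (x * (p₁ * k) + y * q + w * (p₂ * k))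
      (replicate₃ (p₁ * k) q (p₂ * k) x y w) :=
    ⟨fun _ => mem_triple_of_mem_replicate₃, sum_replicate₃⟩
  have hsum₀ : (p₂ - 1) * (p₁ * k) + k * q + 0 * (p₂ * k) = (p₁ + 1) * (p₂ * k) := by
    obtain ⟨f, rfl⟩ : ∃ f, p₂ = f + 1 := ⟨p₂ - 1, by omega⟩
    subst hsum
    simp only [Nat.add_sub_cancel]
    ring
  refine le_tameNum (z := replicate₃ (p₁ * k) q (p₂ * k) 0 0 (p₁ + 1))
    (by simpa using hfact 0 0 (p₁ + 1))
    ⟨_, hsum₀ ▸ hfact (p₂ - 1) k 0, by simp [replicate₃, mem_replicate]; omega⟩ ?_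
  intro z' hz' hqz'
  have hz'eq := eq_replicate₃_count h₁.ne hne h₂.ne hz'.1
  have hsum' := hz'.2
  rw [hz'eq, sum_replicate₃] at hsum'
  obtain ⟨hx, hy, hw⟩ := eq_of_eq_succ_mul_right hq hsum hcop hknd (by omega) hp₁
    (count_pos.2 hqz') hsum'
  rw [hz'eq, hx, hy, hw, numDist, replicate₃_sub h₁.ne hne h₂.ne, replicate₃_sub h₁.ne hne h₂.ne,
    card_replicate₃, card_replicate₃]
  omega

end IsSkParams

theorem add_sub_one_div_eq_and_bounds {p k : ℕ} (hp : 2 ≤ p) (hk : p + 1 ≤ k) :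
    ((k + p - 1 : ℕ) : ℚ) / k = 1 + ((p : ℚ) - 1) / k ∧
      1 < 1 + ((p : ℚ) - 1) / k ∧ 1 + ((p : ℚ) - 1) / k < 2 := by
  have hk₀ : (0 : ℚ) < k := by exact_mod_cast (by omega : 0 < k)
  have hpQ : (2 : ℚ) ≤ p := by exact_mod_cast hp
  have hkQ : (p : ℚ) + 1 ≤ k := by exact_mod_cast hk
  refine ⟨?_, ?_, ?_⟩
  · rw [Nat.cast_sub (by omega), Nat.cast_add, Nat.cast_one]
    field_simp
    ring
  · have : 0 < ((p : ℚ) - 1) / k := div_pos (by linarith) hk₀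
    linarith
  · have : ((p : ℚ) - 1) / k < 1 := (div_lt_one hk₀).2 (by linarith)
    linarith

/-- for the numerical monoids `S_k = ⟨p₁k, q, p₂k⟩` one has
`ω(S_k) = max{k, p₂+1}`, `t(S_k) = k + p₂ − 1`, and for `k ≥ p₂+1`,
`ω(S_k) < t(S_k)` with `1 < t(S_k)/ω(S_k) = 1 + (p₂−1)/k < 2`. -/
theorem omega_lt_tame_family (q p₁ p₂ k : ℕ) (hq : q.Prime) (hp : p₁ < p₂)
    (hp1 : 0 < p₁) (hsum : p₁ + p₂ = q) (hcop : Nat.gcd p₁ p₂ = 1)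
    (hk2 : 2 ≤ k) (hknd : ¬ q ∣ k) (hk1 : p₁ * k < q) (hk2' : q < p₂ * k) :
    omegaNumS {p₁ * k, q, p₂ * k} = (max k (p₂ + 1) : ℕ) ∧
    tameNumS {p₁ * k, q, p₂ * k} = ((k + p₂ - 1 : ℕ) : ℕ∞) ∧
    (p₂ + 1 ≤ k →
      omegaNumS {p₁ * k, q, p₂ * k} < tameNumS {p₁ * k, q, p₂ * k} ∧
      ((k + p₂ - 1 : ℕ) : ℚ) / (k : ℚ) = 1 + ((p₂ : ℚ) - 1) / (k : ℚ) ∧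
      1 < 1 + ((p₂ : ℚ) - 1) / (k : ℚ) ∧
      1 + ((p₂ : ℚ) - 1) / (k : ℚ) < 2) := by
  have H : IsSkParams q p₁ p₂ k := ⟨hq, hsum, hcop, hknd, hp1, hp, hk2, hk1, hk2'⟩
  have hqS : q ∈ ({p₁ * k, q, p₂ * k} : Set ℕ) := by simp
  have h₁S : p₁ * k ∈ ({p₁ * k, q, p₂ * k} : Set ℕ) := by simp
  have hω : omegaNumS {p₁ * k, q, p₂ * k} = (max k (p₂ + 1) : ℕ) := by
    refine le_antisymm (iSup₂_le fun u hu => (H.hasExchanges hu).omegaNum_le) ?_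
    rw [Nat.mono_cast.map_max]
    exact max_le (H.le_omegaNum_left.trans (omegaNum_le_omegaNumS h₁S))
      (H.le_omegaNum_q.trans (omegaNum_le_omegaNumS hqS))
  have ht : tameNumS {p₁ * k, q, p₂ * k} = ((k + p₂ - 1 : ℕ) : ℕ∞) := by
    refine le_antisymm (iSup₂_le fun u hu => iSup_le fun a =>
      ((H.hasExchanges hu).tameNum_le a).trans (Nat.cast_le.2 (by omega))) ?_
    exact H.le_tameNum_q.trans (tameNum_le_tameNumS hqS)
  refine ⟨hω, ht, fun hpk => ⟨?_, add_sub_one_div_eq_and_bounds (by omega) hpk⟩⟩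
  rw [hω, ht]
  exact_mod_cast (by omega : max k (p₂ + 1) < k + p₂ - 1)
end

section
/- Let G = C₄ = {0, g, 2g, 3g} be the cyclic group of order 4. Then the block monoid B(G•) over G• = G \ {0} has no generic presentation. Specifically, with atoms U₁ = g⁴, U₃ = (−g)⁴, U₄ = (−g)·g, the element U₄⁴ has exactly the two factorizations U₁U₃ and U₄⁴, so every minimal presentation contains the relation (U₄⁴, U₁U₃), which does not have full support. -/
open scoped BigOperators

/-- The monoid of zero-sum sequences over `C₄• = C₄ \ {0}`, as multisets over `ZMod 4`
avoiding `0` and with sum `0`. -/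
def B4 : Set (Multiset (ZMod 4)) := {m | (0 : ZMod 4) ∉ m ∧ m.sum = 0}

/-- Atoms of `B(C₄•)`. -/
def IsB4Atom (m : Multiset (ZMod 4)) : Prop :=
  m ∈ B4 ∧ m ≠ 0 ∧ ∀ a b : Multiset (ZMod 4), a ∈ B4 → b ∈ B4 → a + b = m → a = 0 ∨ b = 0

/-- The six atoms `U₁ = g⁴, U₂ = (2g)², U₃ = (−g)⁴, U₄ = (−g)g, U₅ = g²(2g),
U₆ = (2g)(−g)²` of `B(C₄•)` (with `g = 1`). -/
def A4 : Fin 6 → Multiset (ZMod 4) :=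
  ![Multiset.replicate 4 1, Multiset.replicate 2 2, Multiset.replicate 4 3,
    {3, 1}, {1, 1, 2}, {2, 3, 3}]

/-- The factorization homomorphism `π : Z(B(C₄•)) ≅ ℕ⁶ → B(C₄•)`. -/
def π4 (x : Fin 6 → ℕ) : Multiset (ZMod 4) := ∑ i, x i • A4 i

/-- One step of the congruence generated by `σ`. -/
def Step4 (σ : Set ((Fin 6 → ℕ) × (Fin 6 → ℕ))) (x y : Fin 6 → ℕ) : Prop :=
  ∃ p q w : Fin 6 → ℕ, ((p, q) ∈ σ ∨ (q, p) ∈ σ) ∧ x = p + w ∧ y = q + w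

/-- `σ` is a presentation of `B(C₄•)`. -/
def IsPres4 (σ : Set ((Fin 6 → ℕ) × (Fin 6 → ℕ))) : Prop :=
  (∀ r ∈ σ, π4 r.1 = π4 r.2) ∧
    ∀ x y : Fin 6 → ℕ, Relation.EqvGen (Step4 σ) x y ↔ π4 x = π4 y

/-- `σ` is a minimal presentation: no proper subset is a presentation. -/
def IsMinPres4 (σ : Set ((Fin 6 → ℕ) × (Fin 6 → ℕ))) : Prop :=
  IsPres4 σ ∧ ∀ τ ⊆ σ, IsPres4 τ → τ = σ

/-! ### Auxiliary machinery -/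

/-- Normal form of a zero-free multiset over `ZMod 4`. -/
def N4 (a b c : ℕ) : Multiset (ZMod 4) :=
  Multiset.replicate a 1 + Multiset.replicate b 2 + Multiset.replicate c 3

lemma N4_count1 (a b c : ℕ) : (N4 a b c).count 1 = a := by
  simp (config := { decide := true }) [N4, Multiset.count_replicate]
lemma N4_count2 (a b c : ℕ) : (N4 a b c).count 2 = b := by
  simp (config := { decide := true }) [N4, Multiset.count_replicate]
lemma N4_count3 (a b c : ℕ) : (N4 a b c).count 3 = c := by
  simp (config := { decide := true }) [N4, Multiset.count_replicate]
lemma N4_count0 (a b c : ℕ) : (N4 a b c).count 0 = 0 := by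
  simp (config := { decide := true }) [N4, Multiset.count_replicate]

lemma zmod4_cases : ∀ w : ZMod 4, w = 0 ∨ w = 1 ∨ w = 2 ∨ w = 3 := by decide

lemma norm_form (m : Multiset (ZMod 4)) (h : (0 : ZMod 4) ∉ m) :
    m = N4 (m.count 1) (m.count 2) (m.count 3) := by
  ext v
  rcases zmod4_cases v with rfl | rfl | rfl | rfl
  · rw [N4_count0, Multiset.count_eq_zero_of_notMem h]
  · rw [N4_count1]
  · rw [N4_count2]
  · rw [N4_count3]

lemma N4_sum (a b c : ℕ) : (N4 a b c).sum = ((a + 2*b + 3*c : ℕ) : ZMod 4) := by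
  simp [N4, Multiset.sum_replicate]
  ring

lemma N4_sum_zero (a b c : ℕ) : (N4 a b c).sum = 0 ↔ (a + 2*b + 3*c) % 4 = 0 := by
  rw [N4_sum, ZMod.natCast_eq_zero_iff, Nat.dvd_iff_mod_eq_zero]

lemma N4_zero_notMem (a b c : ℕ) : (0 : ZMod 4) ∉ N4 a b c := by
  rw [← Multiset.count_eq_zero, N4_count0]

lemma N4_mem_B4 (a b c : ℕ) : N4 a b c ∈ B4 ↔ (a + 2*b + 3*c) % 4 = 0 := by
  constructor
  · rintro ⟨-, hs⟩; exact (N4_sum_zero a b c).mp hs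
  · intro h; exact ⟨N4_zero_notMem a b c, (N4_sum_zero a b c).mpr h⟩

lemma N4_add (a b c d e f : ℕ) : N4 a b c + N4 d e f = N4 (a+d) (b+e) (c+f) := by
  simp [N4, Multiset.replicate_add]; abel

lemma N4_inj {a b c d e f : ℕ} (h : N4 a b c = N4 d e f) : a = d ∧ b = e ∧ c = f := by
  refine ⟨?_, ?_, ?_⟩
  · rw [← N4_count1 a b c, h, N4_count1]
  · rw [← N4_count2 a b c, h, N4_count2]
  · rw [← N4_count3 a b c, h, N4_count3]

lemma N4_eq_zero {a b c : ℕ} : N4 a b c = 0 ↔ a = 0 ∧ b = 0 ∧ c = 0 := by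
  constructor
  · intro h
    refine ⟨?_, ?_, ?_⟩
    · rw [← N4_count1 a b c, h]; rfl
    · rw [← N4_count2 a b c, h]; rfl
    · rw [← N4_count3 a b c, h]; rfl
  · rintro ⟨rfl, rfl, rfl⟩; rfl

lemma mem_B4_elim {m : Multiset (ZMod 4)} (hm : m ∈ B4) :
    ∃ a b c : ℕ, (a + 2*b + 3*c) % 4 = 0 ∧ m = N4 a b c := by
  obtain ⟨h0, hs⟩ := hm
  refine ⟨m.count 1, m.count 2, m.count 3, ?_, norm_form m h0⟩
  rw [← N4_sum_zero, ← norm_form m h0]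
  exact hs

lemma A4_0 : A4 0 = N4 4 0 0 := by decide
lemma A4_1 : A4 1 = N4 0 2 0 := by decide
lemma A4_2 : A4 2 = N4 0 0 4 := by decide
lemma A4_3 : A4 3 = N4 1 0 1 := by decide
lemma A4_4 : A4 4 = N4 2 1 0 := by decide
lemma A4_5 : A4 5 = N4 0 1 2 := by decide

/-- splitting lemma for atoms -/
lemma atom_split (a b c d e f A B C : ℕ)
    (h1 : (a + 2*b + 3*c) % 4 = 0) (h2 : (d + 2*e + 3*f) % 4 = 0)
    (hatom : (A=4∧B=0∧C=0) ∨ (A=0∧B=2∧C=0) ∨ (A=0∧B=0∧C=4) ∨ (A=1∧B=0∧C=1) ∨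
      (A=2∧B=1∧C=0) ∨ (A=0∧B=1∧C=2))
    (ha : a + d = A) (hb : b + e = B) (hc : c + f = C) :
    (a=0∧b=0∧c=0) ∨ (d=0∧e=0∧f=0) := by
  rcases hatom with ⟨rfl,rfl,rfl⟩|⟨rfl,rfl,rfl⟩|⟨rfl,rfl,rfl⟩|⟨rfl,rfl,rfl⟩|⟨rfl,rfl,rfl⟩|⟨rfl,rfl,rfl⟩ <;>
  · have h3 : a ≤ 4 := by omega
    have h4 : b ≤ 2 := by omega
    have h5 : c ≤ 4 := by omega
    interval_cases a <;> interval_cases b <;> interval_cases c <;> omega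

lemma isAtom_of_triple (A B C : ℕ)
    (hatom : (A=4∧B=0∧C=0) ∨ (A=0∧B=2∧C=0) ∨ (A=0∧B=0∧C=4) ∨ (A=1∧B=0∧C=1) ∨
      (A=2∧B=1∧C=0) ∨ (A=0∧B=1∧C=2)) : IsB4Atom (N4 A B C) := by
  have hmod : (A + 2*B + 3*C) % 4 = 0 := by rcases hatom with ⟨rfl,rfl,rfl⟩|⟨rfl,rfl,rfl⟩|⟨rfl,rfl,rfl⟩|⟨rfl,rfl,rfl⟩|⟨rfl,rfl,rfl⟩|⟨rfl,rfl,rfl⟩ <;> rfl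
  refine ⟨(N4_mem_B4 A B C).mpr hmod, ?_, ?_⟩
  · rw [Ne, N4_eq_zero]; rintro ⟨rfl, rfl, rfl⟩; simp at hatom
  · intro x y hx hy hxy
    obtain ⟨a, b, c, h1, rfl⟩ := mem_B4_elim hx
    obtain ⟨d, e, f, h2, rfl⟩ := mem_B4_elim hy
    rw [N4_add] at hxy
    obtain ⟨ha, hb, hc⟩ := N4_inj hxy
    rcases atom_split a b c d e f A B C h1 h2 hatom ha hb hc with ⟨rfl,rfl,rfl⟩|⟨rfl,rfl,rfl⟩
    · left; rfl
    · right; rfl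

lemma B4_atoms : {m | IsB4Atom m} = Set.range A4 := by
  ext m
  simp only [Set.mem_setOf_eq, Set.mem_range]
  constructor
  · rintro ⟨hm, hne, hmin⟩
    obtain ⟨a, b, c, hmod, rfl⟩ := mem_B4_elim hm
    have hnz : ¬(a = 0 ∧ b = 0 ∧ c = 0) := fun h => hne (N4_eq_zero.mpr h)
    have hdom : (4 ≤ a) ∨ (2 ≤ b) ∨ (4 ≤ c) ∨ (1 ≤ a ∧ 1 ≤ c) ∨ (2 ≤ a ∧ 1 ≤ b) ∨
        (1 ≤ b ∧ 2 ≤ c) := by omega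
    -- helper to finish each case
    have key : ∀ A B C : ℕ, A ≤ a → B ≤ b → C ≤ c → (A + 2*B + 3*C) % 4 = 0 →
        ¬(A = 0 ∧ B = 0 ∧ C = 0) → N4 a b c = N4 A B C := by
      intro A B C hA hB hC hm2 hABC
      have hm3 : ((a - A) + 2*(b - B) + 3*(c - C)) % 4 = 0 := by omega
      have hsum : N4 A B C + N4 (a - A) (b - B) (c - C) = N4 a b c := by
        rw [N4_add]
        congr 1 <;> omega
      rcases hmin _ _ ((N4_mem_B4 _ _ _).mpr hm2) ((N4_mem_B4 _ _ _).mpr hm3) hsum with h | h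
      · exact absurd (N4_eq_zero.mp h) hABC
      · obtain ⟨h1, h2, h3⟩ := N4_eq_zero.mp h
        have : a = A ∧ b = B ∧ c = C := by omega
        rw [this.1, this.2.1, this.2.2]
    rcases hdom with h | h | h | ⟨h, h'⟩ | ⟨h, h'⟩ | ⟨h, h'⟩
    · exact ⟨0, by rw [A4_0, key 4 0 0 h (by omega) (by omega) rfl (by simp)]⟩
    · exact ⟨1, by rw [A4_1, key 0 2 0 (by omega) h (by omega) rfl (by simp)]⟩
    · exact ⟨2, by rw [A4_2, key 0 0 4 (by omega) (by omega) h rfl (by simp)]⟩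
    · exact ⟨3, by rw [A4_3, key 1 0 1 h (by omega) h' rfl (by simp)]⟩
    · exact ⟨4, by rw [A4_4, key 2 1 0 h h' (by omega) rfl (by simp)]⟩
    · exact ⟨5, by rw [A4_5, key 0 1 2 (by omega) h h' rfl (by simp)]⟩
  · rintro ⟨i, rfl⟩
    have hi : i = 0 ∨ i = 1 ∨ i = 2 ∨ i = 3 ∨ i = 4 ∨ i = 5 := by omega
    rcases hi with rfl | rfl | rfl | rfl | rfl | rfl
    · rw [A4_0]; exact isAtom_of_triple 4 0 0 (by simp)
    · rw [A4_1]; exact isAtom_of_triple 0 2 0 (by simp)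
    · rw [A4_2]; exact isAtom_of_triple 0 0 4 (by simp)
    · rw [A4_3]; exact isAtom_of_triple 1 0 1 (by simp)
    · rw [A4_4]; exact isAtom_of_triple 2 1 0 (by simp)
    · rw [A4_5]; exact isAtom_of_triple 0 1 2 (by simp)

/-! ### counts of `π4` -/

lemma A40 : A4 0 = Multiset.replicate 4 1 := rfl
lemma A41 : A4 1 = Multiset.replicate 2 2 := rfl
lemma A42 : A4 2 = Multiset.replicate 4 3 := rfl
lemma A43 : A4 3 = {3,1} := rfl
lemma A44 : A4 4 = {1,1,2} := rfl
lemma A45 : A4 5 = {2,3,3} := rfl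

lemma pi4_cnt (x : Fin 6 → ℕ) (v : ZMod 4) : (π4 x).count v =
    x 0 * (Multiset.replicate 4 1).count v + x 1 * (Multiset.replicate 2 2).count v
    + x 2 * (Multiset.replicate 4 3).count v + x 3 * (({3,1} : Multiset (ZMod 4)).count v)
    + x 4 * (({1,1,2} : Multiset (ZMod 4)).count v) + x 5 * (({2,3,3} : Multiset (ZMod 4)).count v) := by
  simp [π4, Fin.sum_univ_six, A40, A41, A42, A43, A44, A45, Multiset.count_nsmul]

lemma pi4_c1 (x : Fin 6 → ℕ) : (π4 x).count 1 = 4 * x 0 + x 3 + 2 * x 4 := by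
  rw [pi4_cnt]
  simp (config := { decide := true }) [Multiset.count_replicate, Multiset.count_cons,
    Multiset.count_singleton]
  ring
lemma pi4_c2 (x : Fin 6 → ℕ) : (π4 x).count 2 = 2 * x 1 + x 4 + x 5 := by
  rw [pi4_cnt]
  simp (config := { decide := true }) [Multiset.count_replicate, Multiset.count_cons,
    Multiset.count_singleton]
  ring
lemma pi4_c3 (x : Fin 6 → ℕ) : (π4 x).count 3 = 4 * x 2 + x 3 + 2 * x 5 := by
  rw [pi4_cnt]
  simp (config := { decide := true }) [Multiset.count_replicate, Multiset.count_cons,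
    Multiset.count_singleton]
  ring
lemma pi4_c0 (x : Fin 6 → ℕ) : (π4 x).count 0 = 0 := by
  rw [pi4_cnt]
  simp (config := { decide := true }) [Multiset.count_replicate, Multiset.count_cons,
    Multiset.count_singleton]

lemma pi4_add (p w : Fin 6 → ℕ) : π4 (p + w) = π4 p + π4 w := by
  simp [π4, Pi.add_apply, add_nsmul, Finset.sum_add_distrib]

/-! ### the two factorizations -/

def v41 : Fin 6 → ℕ := ![0, 0, 0, 4, 0, 0]
def v42 : Fin 6 → ℕ := ![1, 0, 1, 0, 0, 0]

lemma two_factorizations (x : Fin 6 → ℕ) :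
    π4 x = π4 v41 ↔ x = v41 ∨ x = v42 := by
  constructor
  · intro h
    have e1 : 4 * x 0 + x 3 + 2 * x 4 = 4 := by
      have := congrArg (Multiset.count (1 : ZMod 4)) h
      rw [pi4_c1, pi4_c1] at this
      simpa [show v41 0 = 0 from rfl, show v41 3 = 4 from rfl, show v41 4 = 0 from rfl]
        using this
    have e2 : 2 * x 1 + x 4 + x 5 = 0 := by
      have := congrArg (Multiset.count (2 : ZMod 4)) h
      rw [pi4_c2, pi4_c2] at this
      simpa [show v41 1 = 0 from rfl, show v41 4 = 0 from rfl, show v41 5 = 0 from rfl]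
        using this
      
    have e3 : 4 * x 2 + x 3 + 2 * x 5 = 4 := by
      have := congrArg (Multiset.count (3 : ZMod 4)) h
      rw [pi4_c3, pi4_c3] at this
      simpa [show v41 2 = 0 from rfl, show v41 3 = 4 from rfl, show v41 5 = 0 from rfl]
        using this
    have hx : x = ![x 0, x 1, x 2, x 3, x 4, x 5] := by
      funext i; fin_cases i <;> rfl
    rcases (by omega :
        (x 0 = 0 ∧ x 1 = 0 ∧ x 2 = 0 ∧ x 3 = 4 ∧ x 4 = 0 ∧ x 5 = 0) ∨
        (x 0 = 1 ∧ x 1 = 0 ∧ x 2 = 1 ∧ x 3 = 0 ∧ x 4 = 0 ∧ x 5 = 0)) with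
      ⟨h0,h1,h2,h3,h4,h5⟩ | ⟨h0,h1,h2,h3,h4,h5⟩
    · left; rw [hx, h0, h1, h2, h3, h4, h5]; rfl
    · right; rw [hx, h0, h1, h2, h3, h4, h5]; rfl
  · rintro (rfl | rfl)
    · rfl
    · decide

/-! ### every presentation contains the relation -/

lemma v4_disj : ∀ j : Fin 6, v41 j = 0 ∨ v42 j = 0 := by decide

lemma pres_contains (σ : Set ((Fin 6 → ℕ) × (Fin 6 → ℕ))) (hp : IsPres4 σ) :
    ((v41, v42) ∈ σ ∨ (v42, v41) ∈ σ) := by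
  set v1 : Fin 6 → ℕ := v41 with hv1
  set v2 : Fin 6 → ℕ := v42 with hv2
  have hM : π4 v2 = π4 v1 := by decide
  have key : ∀ x y : Fin 6 → ℕ, Relation.EqvGen (Step4 σ) x y →
      π4 x = π4 v1 → π4 y = π4 v1 →
      (x = y ∨ ((v1, v2) ∈ σ ∨ (v2, v1) ∈ σ)) := by
    intro x y h
    induction h with
    | rel x y hxy =>
      intro h1 h2
      rcases (two_factorizations x).mp h1 with rfl | rfl <;>
        rcases (two_factorizations y).mp h2 with rfl | rfl
      · exact Or.inl rfl
      · right
        obtain ⟨p, q, w, hpq, hx, hy⟩ := hxy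
        have hw : w = 0 := by
          funext i
          have a1 := congrFun hx i
          have a2 := congrFun hy i
          simp only [Pi.add_apply] at a1 a2
          simp only [Pi.zero_apply]
          rcases v4_disj i with h' | h' <;> simp only [hv1, hv2, h'] at a1 a2 <;> omega
        subst hw
        rw [add_zero] at hx hy
        subst hx; subst hy
        exact hpq
      · right
        obtain ⟨p, q, w, hpq, hx, hy⟩ := hxy
        have hw : w = 0 := by
          funext i
          have a1 := congrFun hx i
          have a2 := congrFun hy i
          simp only [Pi.add_apply] at a1 a2
          simp only [Pi.zero_apply]
          rcases v4_disj i with h' | h' <;> simp only [hv1, hv2, h'] at a1 a2 <;> omega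
        subst hw
        rw [add_zero] at hx hy
        subst hx; subst hy
        exact hpq.symm
      · exact Or.inl rfl
    | refl x => intro _ _; exact Or.inl rfl
    | symm x y h ih =>
      intro h1 h2
      rcases ih h2 h1 with h' | h'
      · exact Or.inl h'.symm
      · exact Or.inr h'
    | trans x z y h1 h2 ih1 ih2 =>
      intro ha hb
      have hz : π4 z = π4 v1 := by
        rw [← (hp.2 x z).mp h1]; exact ha
      rcases ih1 ha hz with rfl | h'
      · exact ih2 hz hb
      · exact Or.inr h'
  have h12 : Relation.EqvGen (Step4 σ) v1 v2 := (hp.2 v1 v2).mpr hM.symm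
  rcases key v1 v2 h12 rfl hM with h | h
  · exact absurd (congrFun h 3) (by decide)
  · exact h

/-- `B(C₄•)` has atoms exactly `U₁,…,U₆`; the element `U₄⁴` has exactly
the two factorizations `U₄⁴` and `U₁U₃`; every minimal presentation contains the
relation `(U₄⁴, U₁U₃)` (up to symmetry), which does not have full support; and
consequently `B(C₄•)` has no generic presentation. -/
theorem B4_no_generic_presentation :
    ({m | IsB4Atom m} = Set.range A4) ∧
    (∀ x : Fin 6 → ℕ, π4 x = π4 ![0, 0, 0, 4, 0, 0] ↔
      x = ![0, 0, 0, 4, 0, 0] ∨ x = ![1, 0, 1, 0, 0, 0]) ∧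
    (∀ σ, IsMinPres4 σ →
      ((![0, 0, 0, 4, 0, 0], ![1, 0, 1, 0, 0, 0]) ∈ σ ∨
        (![1, 0, 1, 0, 0, 0], ![0, 0, 0, 4, 0, 0]) ∈ σ)) ∧
    ¬∃ σ, IsMinPres4 σ ∧ ∀ r ∈ σ, ∀ i : Fin 6, r.1 i + r.2 i ≠ 0 := by
  refine ⟨B4_atoms, fun x => two_factorizations x, fun σ hσ => pres_contains σ hσ.1, ?_⟩
  rintro ⟨σ, hσ, hfull⟩
  rcases pres_contains σ hσ.1 with h | h
  · exact hfull _ h 1 (by decide)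
  · exact hfull _ h 1 (by decide)
end
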